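/- arXiv:2001.05281 — 7 statements merged into one kernel-verified Lean document; each statement's English description precedes it below -/
import Mathlib

section
/- Assume ∑_{i=0}^d α_i |ẑ|^i > 0. Then the elementwise backward error of ẑ satisfies the explicit formula η_α(ẑ) = |p(ẑ)| / (∑_{i=0}^d α_i |ẑ|^i), and the infimum in its definition is attained. -/
/-- Assume `∑_{i=0}^d α_i |ẑ|^i > 0`. Then the elementwise backward error
`η_α(ẑ) = inf{ε ≥ 0 : ∃ Δp, p(ẑ) + ∑ Δp_i ẑ^i = 0 ∧ |Δp_i| ≤ ε α_i}` satisfies the explicit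
formula `η_α(ẑ) = |p(ẑ)| / (∑_{i=0}^d α_i |ẑ|^i)`, and the infimum is attained. -/
theorem elementwise_backward_error_formula
    (d : ℕ) (p : ℕ → ℂ) (hpd : p d ≠ 0) (zh : ℂ)
    (α : ℕ → ℝ) (hα : ∀ i, i ≤ d → 0 ≤ α i)
    (hS : 0 < ∑ i ∈ Finset.range (d + 1), α i * ‖zh‖ ^ i) :
    sInf {ε : ℝ | 0 ≤ ε ∧ ∃ Δp : ℕ → ℂ,
        (∑ i ∈ Finset.range (d + 1), p i * zh ^ i) +
          (∑ i ∈ Finset.range (d + 1), Δp i * zh ^ i) = 0 ∧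
        ∀ i, i ≤ d → ‖Δp i‖ ≤ ε * α i} =
      ‖∑ i ∈ Finset.range (d + 1), p i * zh ^ i‖ /
        (∑ i ∈ Finset.range (d + 1), α i * ‖zh‖ ^ i) ∧
    (‖∑ i ∈ Finset.range (d + 1), p i * zh ^ i‖ /
        (∑ i ∈ Finset.range (d + 1), α i * ‖zh‖ ^ i)) ∈
      {ε : ℝ | 0 ≤ ε ∧ ∃ Δp : ℕ → ℂ,
        (∑ i ∈ Finset.range (d + 1), p i * zh ^ i) +
          (∑ i ∈ Finset.range (d + 1), Δp i * zh ^ i) = 0 ∧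
        ∀ i, i ≤ d → ‖Δp i‖ ≤ ε * α i} := by
  set P : ℂ := ∑ i ∈ Finset.range (d + 1), p i * zh ^ i with hPdef
  set T : ℝ := ∑ i ∈ Finset.range (d + 1), α i * ‖zh‖ ^ i with hTdef
  have hT0 : T ≠ 0 := ne_of_gt hS
  set a : ℂ := ((‖zh‖ : ℝ) : ℂ) with hadef
  have key : ∀ i : ℕ, ((starRingEnd ℂ) zh) ^ i / a ^ i * zh ^ i = a ^ i := by
    intro i
    rcases eq_or_ne zh 0 with h | h
    · subst h
      cases i with
      | zero => simp
      | succ n => simp [hadef]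
    · have ha : a ≠ 0 := by
        simp [hadef, h]
      have h1 : ((starRingEnd ℂ) zh) ^ i * zh ^ i = a ^ i * a ^ i := by
        rw [← mul_pow, ← mul_pow]
        congr 1
        rw [← Complex.normSq_eq_conj_mul_self]
        rw [hadef]
        rw [Complex.normSq_eq_norm_sq]
        push_cast
        ring
      field_simp
      linear_combination h1
  have habs : ∀ i : ℕ, ‖((starRingEnd ℂ) zh) ^ i / a ^ i‖ ≤ 1 := by
    intro i
    rw [norm_div, norm_pow, norm_pow]
    simp only [Complex.norm_conj, hadef, Complex.norm_real, Real.norm_eq_abs, abs_of_nonneg (norm_nonneg zh)]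
    exact div_self_le_one _
  -- membership
  have hmem : (‖P‖ / T) ∈ {ε : ℝ | 0 ≤ ε ∧ ∃ Δp : ℕ → ℂ,
        P + (∑ i ∈ Finset.range (d + 1), Δp i * zh ^ i) = 0 ∧
        ∀ i, i ≤ d → ‖Δp i‖ ≤ ε * α i} := by
    refine ⟨by positivity, fun i => -(P / (T : ℂ)) * (α i : ℂ) * (((starRingEnd ℂ) zh) ^ i / a ^ i), ?_, ?_⟩
    · have hsum : (∑ i ∈ Finset.range (d + 1),
          -(P / (T : ℂ)) * (α i : ℂ) * (((starRingEnd ℂ) zh) ^ i / a ^ i) * zh ^ i)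
          = -(P / (T : ℂ)) * (T : ℂ) := by
        rw [Finset.sum_congr rfl (fun i _ => by rw [mul_assoc, key i])]
        simp only [mul_assoc, ← Finset.mul_sum]
        congr 1
        rw [hTdef]
        push_cast
        rfl
      rw [hsum]
      have hTc : (T : ℂ) ≠ 0 := by exact_mod_cast hT0
      field_simp
      ring
    · intro i hi
      rw [norm_mul, norm_mul, norm_neg, norm_div, Complex.norm_real,
        Complex.norm_real, Real.norm_eq_abs, Real.norm_eq_abs, abs_of_nonneg (hα i hi), abs_of_nonneg (le_of_lt hS)]
      calc ‖P‖ / T * α i * ‖((starRingEnd ℂ) zh) ^ i / a ^ i‖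
          ≤ ‖P‖ / T * α i * 1 := by
            apply mul_le_mul_of_nonneg_left (habs i)
            exact mul_nonneg (by positivity) (hα i hi)
        _ = ‖P‖ / T * α i := by ring
  -- lower bound
  have hlb : ∀ ε ∈ {ε : ℝ | 0 ≤ ε ∧ ∃ Δp : ℕ → ℂ,
        P + (∑ i ∈ Finset.range (d + 1), Δp i * zh ^ i) = 0 ∧
        ∀ i, i ≤ d → ‖Δp i‖ ≤ ε * α i}, ‖P‖ / T ≤ ε := by
    rintro ε ⟨hε0, Δp, heq, hb⟩
    rw [div_le_iff₀ hS]
    have hPneg : P = -∑ i ∈ Finset.range (d + 1), Δp i * zh ^ i := by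
      linear_combination heq
    calc ‖P‖ = ‖∑ i ∈ Finset.range (d + 1), Δp i * zh ^ i‖ := by
          rw [hPneg, norm_neg]
      _ ≤ ∑ i ∈ Finset.range (d + 1), ‖Δp i * zh ^ i‖ :=
          norm_sum_le _ _
      _ ≤ ∑ i ∈ Finset.range (d + 1), ε * (α i * ‖zh‖ ^ i) := by
          apply Finset.sum_le_sum
          intro i hi
          rw [norm_mul, norm_pow]
          have := hb i (Nat.lt_succ_iff.mp (Finset.mem_range.mp hi))
          calc ‖Δp i‖ * ‖zh‖ ^ i
              ≤ ε * α i * ‖zh‖ ^ i := by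
                apply mul_le_mul_of_nonneg_right this (by positivity)
            _ = ε * (α i * ‖zh‖ ^ i) := by ring
      _ = ε * T := by rw [hTdef, Finset.mul_sum]
  constructor
  · exact le_antisymm (csInf_le ⟨‖P‖ / T, hlb⟩ hmem) (le_csInf ⟨_, hmem⟩ hlb)
  · exact hmem
end

section
/- Assume S := ∑_{i=0}^d α_i |ẑ|^i > 0. Then there exist complex perturbations Δp_0, …, Δp_d with |Δp_i| ≤ (|p(ẑ)|/S)·α_i for every i ∈ {0,…,d} and p(ẑ) + ∑_{i=0}^d Δp_i ẑ^i = 0; in particular the lower bound |p(ẑ)|/S for the elementwise backward error η_α(ẑ) is attained. -/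
/-- Assume `S := ∑_{i=0}^d α_i |ẑ|^i > 0`. Then there exist complex perturbations
`Δp_0, …, Δp_d` with `|Δp_i| ≤ (|p(ẑ)|/S)·α_i` for every `i ∈ {0,…,d}` and
`p(ẑ) + ∑_{i=0}^d Δp_i ẑ^i = 0`; in particular the lower bound `|p(ẑ)|/S` for the
elementwise backward error `η_α(ẑ)` is attained. -/
theorem elementwise_backward_error_attained
    (d : ℕ) (p : ℕ → ℂ) (hpd : p d ≠ 0) (zh : ℂ)
    (α : ℕ → ℝ) (hα : ∀ i, i ≤ d → 0 ≤ α i)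
    (hS : 0 < ∑ i ∈ Finset.range (d + 1), α i * ‖zh‖ ^ i) :
    ∃ Δp : ℕ → ℂ,
      (∀ i, i ≤ d → ‖Δp i‖ ≤
        (‖∑ i ∈ Finset.range (d + 1), p i * zh ^ i‖ /
          (∑ i ∈ Finset.range (d + 1), α i * ‖zh‖ ^ i)) * α i) ∧
      (∑ i ∈ Finset.range (d + 1), p i * zh ^ i) +
        (∑ i ∈ Finset.range (d + 1), Δp i * zh ^ i) = 0 := by
  set P : ℂ := ∑ i ∈ Finset.range (d + 1), p i * zh ^ i with hP
  set S : ℝ := ∑ i ∈ Finset.range (d + 1), α i * ‖zh‖ ^ i with hSdef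
  have hSne : (S : ℂ) ≠ 0 := by
    exact_mod_cast ne_of_gt hS
  -- unit-ish factors
  set c : ℕ → ℂ := fun i => if zh = 0 then (if i = 0 then 1 else 0)
    else (starRingEnd ℂ zh) ^ i / ((‖zh‖ : ℝ) : ℂ) ^ i with hc
  have hcabs : ∀ i, ‖c i‖ ≤ 1 := by
    intro i
    simp only [hc]
    split_ifs with h1 h2
    · simp
    · simp
    · rw [norm_div, norm_pow, norm_pow]
      simp only [Complex.norm_conj, Complex.norm_real, norm_norm]
      rw [
        div_self (pow_ne_zero i (norm_ne_zero_iff.mpr h1))]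
  have hckey : ∀ i, c i * zh ^ i = ((‖zh‖ : ℝ) : ℂ) ^ i := by
    intro i
    simp only [hc]
    by_cases h1 : zh = 0
    · rw [if_pos h1]
      subst h1
      rcases i with _ | n <;> simp
    · rw [if_neg h1]
      have hz : ((‖zh‖ : ℝ) : ℂ) ^ i ≠ 0 :=
        pow_ne_zero i (by simpa using h1)
      rw [div_mul_eq_mul_div, div_eq_iff hz, ← mul_pow, ← mul_pow]
      congr 1
      rw [mul_comm, Complex.mul_conj, Complex.normSq_eq_norm_sq]
      push_cast
      ring
  refine ⟨fun i => -P * (α i : ℂ) * c i / (S : ℂ), ?_, ?_⟩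
  · intro i hi
    rw [norm_div, norm_mul, norm_mul, norm_neg]
    rw [Complex.norm_real, Complex.norm_real, Real.norm_eq_abs, Real.norm_eq_abs]
    rw [abs_of_nonneg (hα i hi), abs_of_pos hS]
    rw [div_mul_eq_mul_div, div_le_div_iff_of_pos_right hS]
    calc ‖P‖ * α i * ‖c i‖
        ≤ ‖P‖ * α i * 1 := by
          exact mul_le_mul_of_nonneg_left (hcabs i)
            (mul_nonneg (norm_nonneg _) (hα i hi))
      _ = ‖P‖ * α i := by ring
  · have : ∑ i ∈ Finset.range (d + 1), (-P * (α i : ℂ) * c i / (S : ℂ)) * zh ^ i = -P := by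
      simp only [div_mul_eq_mul_div]
      rw [← Finset.sum_div, div_eq_iff hSne]
      have : ∀ i ∈ Finset.range (d + 1),
          -P * (α i : ℂ) * c i * zh ^ i = -P * ((α i : ℂ) * (((‖zh‖ : ℝ) : ℂ)) ^ i) := by
        intro i _
        rw [mul_assoc (-P * (α i : ℂ)), hckey i]
        ring
      rw [Finset.sum_congr rfl this, ← Finset.mul_sum]
      congr 1
      rw [hSdef]
      push_cast
      rfl
    rw [this]
    ring
end

section
/- Let 1 ≤ ℓ ≤ t and let i satisfy k_{ℓ−1} ≤ i ≤ k_ℓ and p_i ≠ 0. Then for every x > 0, (max_{0≤j≤d} |p_j| x^j)/(|p_i| x^i) ≥ (max_{0≤j≤d} |p_j| τ_ℓ^j)/(|p_i| τ_ℓ^i), and consequently γ_i := inf_{x>0} (max_{0≤j≤d} |p_j| x^j)/(|p_i| x^i) is attained at x = τ_ℓ and equals |p_{k_{ℓ−1}}| τ_ℓ^{k_{ℓ−1}} / (|p_i| τ_ℓ^i) = |p_{k_ℓ}| τ_ℓ^{k_ℓ} / (|p_i| τ_ℓ^i). -/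
/-- Let `1 ≤ ℓ ≤ t` and let `i` satisfy `k_{ℓ−1} ≤ i ≤ k_ℓ` and `p_i ≠ 0`. Then
for every `x > 0`, `(max_{0≤j≤d} |p_j| x^j)/(|p_i| x^i) ≥ (max_{0≤j≤d} |p_j| τ_ℓ^j)/(|p_i| τ_ℓ^i)`,
and consequently `γ_i := inf_{x>0} (max_{0≤j≤d} |p_j| x^j)/(|p_i| x^i)` is attained at `x = τ_ℓ`
and equals `|p_{k_{ℓ−1}}| τ_ℓ^{k_{ℓ−1}} / (|p_i| τ_ℓ^i) = |p_{k_ℓ}| τ_ℓ^{k_ℓ} / (|p_i| τ_ℓ^i)`. -/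
theorem gamma_attained_at_tropical_root_nonzero_coeff
    (d t : ℕ) (p : ℕ → ℂ) (hp0 : p 0 ≠ 0) (hpd : p d ≠ 0)
    (k : ℕ → ℕ) (hk0 : k 0 = 0) (hkt : k t = d)
    (hkmono : ∀ ℓ, ℓ < t → k ℓ < k (ℓ + 1))
    (hpk : ∀ ℓ, ℓ ≤ t → p (k ℓ) ≠ 0)
    (τ : ℕ → ℝ)
    (hτ : ∀ ℓ, 1 ≤ ℓ → ℓ ≤ t →
      τ ℓ = (‖p (k (ℓ - 1))‖ / ‖p (k ℓ)‖) ^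
            (1 / ((k ℓ - k (ℓ - 1) : ℕ) : ℝ)))
    (hτmono : ∀ ℓ, 1 ≤ ℓ → ℓ < t → τ ℓ < τ (ℓ + 1))
    (hhull : ∀ ℓ, 1 ≤ ℓ → ℓ ≤ t → ∀ j, k (ℓ - 1) ≤ j → j ≤ k ℓ →
      ‖p j‖ * τ ℓ ^ j ≤ ‖p (k ℓ)‖ * τ ℓ ^ (k ℓ))
    (ℓ i : ℕ) (hℓ1 : 1 ≤ ℓ) (hℓt : ℓ ≤ t)
    (hi1 : k (ℓ - 1) ≤ i) (hi2 : i ≤ k ℓ) (hpi : p i ≠ 0) :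
    (∀ x : ℝ, 0 < x →
      ((Finset.range (d + 1)).sup' Finset.nonempty_range_add_one
          fun j => ‖p j‖ * τ ℓ ^ j) / (‖p i‖ * τ ℓ ^ i) ≤
      ((Finset.range (d + 1)).sup' Finset.nonempty_range_add_one
          fun j => ‖p j‖ * x ^ j) / (‖p i‖ * x ^ i)) ∧
    sInf {y : ℝ | ∃ x : ℝ, 0 < x ∧
        y = ((Finset.range (d + 1)).sup' Finset.nonempty_range_add_one
            fun j => ‖p j‖ * x ^ j) / (‖p i‖ * x ^ i)} =
      ((Finset.range (d + 1)).sup' Finset.nonempty_range_add_one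
          fun j => ‖p j‖ * τ ℓ ^ j) / (‖p i‖ * τ ℓ ^ i) ∧
    ((Finset.range (d + 1)).sup' Finset.nonempty_range_add_one
        fun j => ‖p j‖ * τ ℓ ^ j) / (‖p i‖ * τ ℓ ^ i) =
      ‖p (k (ℓ - 1))‖ * τ ℓ ^ (k (ℓ - 1)) / (‖p i‖ * τ ℓ ^ i) ∧
    ‖p (k (ℓ - 1))‖ * τ ℓ ^ (k (ℓ - 1)) / (‖p i‖ * τ ℓ ^ i) =
      ‖p (k ℓ)‖ * τ ℓ ^ (k ℓ) / (‖p i‖ * τ ℓ ^ i) := by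
  classical
  have ht1 : 1 ≤ t := hℓ1.trans hℓt
  have hAnn : ∀ j, (0:ℝ) ≤ ‖p j‖ := fun j => norm_nonneg _
  have hApos : ∀ r, r ≤ t → 0 < ‖p (k r)‖ :=
    fun r hr => norm_pos_iff.mpr (hpk r hr)
  have hAipos : 0 < ‖p i‖ := norm_pos_iff.mpr hpi
  -- k is monotone on [0,t]
  have hkle : ∀ a b, a ≤ b → b ≤ t → k a ≤ k b := by
    intro a b hab
    induction b, hab using Nat.le_induction with
    | base => intro _; exact le_rfl
    | succ n hn ih =>
      intro hbt
      exact (ih (by omega)).trans (hkmono n (by omega)).le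
  have hmpos : ∀ r, 1 ≤ r → r ≤ t → k (r - 1) < k r := by
    intro r h1 h2
    have h := hkmono (r - 1) (by omega)
    have : r - 1 + 1 = r := by omega
    rwa [this] at h
  -- τ is positive
  have hτpos : ∀ r, 1 ≤ r → r ≤ t → 0 < τ r := by
    intro r h1 h2
    rw [hτ r h1 h2]
    exact Real.rpow_pos_of_pos (div_pos (hApos (r-1) (by omega)) (hApos r h2)) _
  have hσpos : 0 < τ ℓ := hτpos ℓ hℓ1 hℓt
  -- fundamental power identity
  have hτpow : ∀ r, 1 ≤ r → r ≤ t →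
      ‖p (k (r-1))‖ = ‖p (k r)‖ * τ r ^ (k r - k (r-1)) := by
    intro r h1 h2
    have hm : (k r - k (r-1)) ≠ 0 := by have := hmpos r h1 h2; omega
    have hb : (0:ℝ) < ‖p (k (r-1))‖ / ‖p (k r)‖ :=
      div_pos (hApos (r-1) (by omega)) (hApos r h2)
    have hpow : τ r ^ (k r - k (r-1))
        = ‖p (k (r-1))‖ / ‖p (k r)‖ := by
      rw [hτ r h1 h2, ← Real.rpow_natCast
        ((‖p (k (r-1))‖ / ‖p (k r)‖) ^
          (1 / ((k r - k (r-1) : ℕ) : ℝ))) (k r - k (r-1)),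
        ← Real.rpow_mul hb.le, one_div_mul_cancel (by exact_mod_cast hm), Real.rpow_one]
    rw [hpow, mul_div_assoc']
    exact (mul_div_cancel_left₀ _ (hApos r h2).ne').symm
  -- τ is monotone (≤) on [1,t]
  have hτle : ∀ a b, 1 ≤ a → a ≤ b → b ≤ t → τ a ≤ τ b := by
    intro a b h1 hab
    induction b, hab using Nat.le_induction with
    | base => intro _; exact le_rfl
    | succ n hn ih =>
      intro hbt
      exact (ih (by omega)).trans (hτmono n (by omega) (by omega)).le
  -- single step of the chain, upward
  have hFup1 : ∀ r, 1 ≤ r → r ≤ ℓ →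
      ‖p (k (r-1))‖ * τ ℓ ^ (k (r-1)) ≤ ‖p (k r)‖ * τ ℓ ^ (k r) := by
    intro r h1 h2
    have hrt : r ≤ t := h2.trans hℓt
    have hm := hmpos r h1 hrt
    have hτr := hτpos r h1 hrt
    have hle : τ r ≤ τ ℓ := hτle r ℓ h1 h2 hℓt
    calc ‖p (k (r-1))‖ * τ ℓ ^ (k (r-1))
        = ‖p (k r)‖ * τ r ^ (k r - k (r-1)) * τ ℓ ^ (k (r-1)) := by
          rw [← hτpow r h1 hrt]
      _ ≤ ‖p (k r)‖ * τ ℓ ^ (k r - k (r-1)) * τ ℓ ^ (k (r-1)) :=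
          mul_le_mul_of_nonneg_right
            (mul_le_mul_of_nonneg_left (pow_le_pow_left₀ hτr.le hle _) (hAnn _))
            (pow_nonneg hσpos.le _)
      _ = ‖p (k r)‖ * τ ℓ ^ (k r) := by
          rw [mul_assoc, ← pow_add,
            show k r - k (r-1) + k (r-1) = k r from by omega]
  -- single step of the chain, downward
  have hFdown1 : ∀ r, ℓ + 1 ≤ r → r ≤ t →
      ‖p (k r)‖ * τ ℓ ^ (k r) ≤ ‖p (k (r-1))‖ * τ ℓ ^ (k (r-1)) := by
    intro r h1 hrt
    have hm := hmpos r (by omega) hrt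
    have hle : τ ℓ ≤ τ r := hτle ℓ r hℓ1 (by omega) hrt
    calc ‖p (k r)‖ * τ ℓ ^ (k r)
        = ‖p (k r)‖ * τ ℓ ^ (k r - k (r-1)) * τ ℓ ^ (k (r-1)) := by
          rw [mul_assoc, ← pow_add,
            show k r - k (r-1) + k (r-1) = k r from by omega]
      _ ≤ ‖p (k r)‖ * τ r ^ (k r - k (r-1)) * τ ℓ ^ (k (r-1)) :=
          mul_le_mul_of_nonneg_right
            (mul_le_mul_of_nonneg_left (pow_le_pow_left₀ hσpos.le hle _) (hAnn _))
            (pow_nonneg hσpos.le _)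
      _ = ‖p (k (r-1))‖ * τ ℓ ^ (k (r-1)) := by
          rw [← hτpow r (by omega) hrt]
  -- chains
  have hFup : ∀ a b, a ≤ b → b ≤ ℓ →
      ‖p (k a)‖ * τ ℓ ^ (k a) ≤ ‖p (k b)‖ * τ ℓ ^ (k b) := by
    intro a b hab
    induction b, hab using Nat.le_induction with
    | base => intro _; exact le_rfl
    | succ n hn ih =>
      intro hbl
      refine (ih (by omega)).trans ?_
      have := hFup1 (n+1) (by omega) hbl
      simpa using this
  have hFdown : ∀ b, ℓ ≤ b → b ≤ t →
      ‖p (k b)‖ * τ ℓ ^ (k b) ≤ ‖p (k ℓ)‖ * τ ℓ ^ (k ℓ) := by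
    intro b hb
    induction b, hb using Nat.le_induction with
    | base => intro _; exact le_rfl
    | succ n hn ih =>
      intro hbt
      have h1 := hFdown1 (n+1) (by omega) hbt
      simp only [Nat.add_sub_cancel] at h1
      exact h1.trans (ih (by omega))
  -- the two endpoint values coincide
  have hEq : ‖p (k (ℓ-1))‖ * τ ℓ ^ (k (ℓ-1))
      = ‖p (k ℓ)‖ * τ ℓ ^ (k ℓ) := by
    have hm := hmpos ℓ hℓ1 hℓt
    rw [hτpow ℓ hℓ1 hℓt, mul_assoc, ← pow_add,
      show k ℓ - k (ℓ-1) + k (ℓ-1) = k ℓ from by omega]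
  -- every j ≤ d lies in some interval [k (r-1), k r]
  have hinterval : ∀ j, j ≤ d → ∃ r, 1 ≤ r ∧ r ≤ t ∧ k (r-1) ≤ j ∧ j ≤ k r := by
    intro j hj
    have hex : ∃ r, 1 ≤ r ∧ j ≤ k r := ⟨t, ht1, by rw [hkt]; exact hj⟩
    set r := Nat.find hex with hrdef
    have hr := Nat.find_spec hex
    refine ⟨r, hr.1, Nat.find_le ⟨ht1, by rw [hkt]; exact hj⟩, ?_, hr.2⟩
    by_cases h1 : r = 1
    · rw [h1]; simp [hk0]
    · have h2 : r - 1 < r := by omega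
      have h3 := Nat.find_min hex h2
      push_neg at h3
      have h4 := h3 (by omega)
      omega
  -- global bound at τ ℓ
  have hbound : ∀ j, j ≤ d →
      ‖p j‖ * τ ℓ ^ j ≤ ‖p (k ℓ)‖ * τ ℓ ^ (k ℓ) := by
    intro j hj
    obtain ⟨r, hr1, hrt, hj1, hj2⟩ := hinterval j hj
    have hτr := hτpos r hr1 hrt
    have hhl := hhull r hr1 hrt j hj1 hj2
    rcases le_or_gt r ℓ with hcase | hcase
    · have hle : τ r ≤ τ ℓ := hτle r ℓ hr1 hcase hℓt
      have h1 : ‖p j‖ ≤ ‖p (k r)‖ * τ r ^ (k r - j) := by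
        have h2 : ‖p j‖ * τ r ^ j
            ≤ ‖p (k r)‖ * τ r ^ (k r - j) * τ r ^ j := by
          calc ‖p j‖ * τ r ^ j ≤ ‖p (k r)‖ * τ r ^ (k r) := hhl
            _ = ‖p (k r)‖ * τ r ^ (k r - j) * τ r ^ j := by
                rw [mul_assoc, ← pow_add, show k r - j + j = k r from by omega]
        exact le_of_mul_le_mul_right h2 (pow_pos hτr j)
      have h3 : ‖p j‖ * τ ℓ ^ j
          ≤ ‖p (k r)‖ * τ ℓ ^ (k r) := by
        calc ‖p j‖ * τ ℓ ^ j
            ≤ ‖p (k r)‖ * τ r ^ (k r - j) * τ ℓ ^ j :=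
              mul_le_mul_of_nonneg_right h1 (pow_nonneg hσpos.le _)
          _ ≤ ‖p (k r)‖ * τ ℓ ^ (k r - j) * τ ℓ ^ j :=
              mul_le_mul_of_nonneg_right
                (mul_le_mul_of_nonneg_left (pow_le_pow_left₀ hτr.le hle _) (hAnn _))
                (pow_nonneg hσpos.le _)
          _ = ‖p (k r)‖ * τ ℓ ^ (k r) := by
              rw [mul_assoc, ← pow_add, show k r - j + j = k r from by omega]
      exact h3.trans (hFup r ℓ hcase le_rfl)
    · have hle : τ ℓ ≤ τ r := hτle ℓ r hℓ1 hcase.le hrt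
      have hm := hmpos r hr1 hrt
      have heq : ‖p (k (r-1))‖ * τ r ^ (k (r-1))
          = ‖p (k r)‖ * τ r ^ (k r) := by
        rw [hτpow r hr1 hrt, mul_assoc, ← pow_add,
          show k r - k (r-1) + k (r-1) = k r from by omega]
      have h1 : ‖p j‖ * τ r ^ (j - k (r-1)) ≤ ‖p (k (r-1))‖ := by
        have h2 : ‖p j‖ * τ r ^ (j - k (r-1)) * τ r ^ (k (r-1))
            ≤ ‖p (k (r-1))‖ * τ r ^ (k (r-1)) := by
          calc ‖p j‖ * τ r ^ (j - k (r-1)) * τ r ^ (k (r-1))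
              = ‖p j‖ * τ r ^ j := by
                rw [mul_assoc, ← pow_add, show j - k (r-1) + k (r-1) = j from by omega]
            _ ≤ ‖p (k r)‖ * τ r ^ (k r) := hhl
            _ = ‖p (k (r-1))‖ * τ r ^ (k (r-1)) := heq.symm
        exact le_of_mul_le_mul_right h2 (pow_pos hτr _)
      have h3 : ‖p j‖ * τ ℓ ^ j
          ≤ ‖p (k (r-1))‖ * τ ℓ ^ (k (r-1)) := by
        calc ‖p j‖ * τ ℓ ^ j
            = ‖p j‖ * τ ℓ ^ (j - k (r-1)) * τ ℓ ^ (k (r-1)) := by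
              rw [mul_assoc, ← pow_add, show j - k (r-1) + k (r-1) = j from by omega]
          _ ≤ ‖p j‖ * τ r ^ (j - k (r-1)) * τ ℓ ^ (k (r-1)) :=
              mul_le_mul_of_nonneg_right
                (mul_le_mul_of_nonneg_left (pow_le_pow_left₀ hσpos.le hle _) (hAnn _))
                (pow_nonneg hσpos.le _)
          _ ≤ ‖p (k (r-1))‖ * τ ℓ ^ (k (r-1)) :=
              mul_le_mul_of_nonneg_right h1 (pow_nonneg hσpos.le _)
      exact h3.trans (hFdown (r-1) (by omega) (by omega))
  have hkℓd : k ℓ ≤ d := by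
    rw [← hkt]; exact hkle ℓ t hℓt le_rfl
  have hkℓ1d : k (ℓ-1) ≤ d := le_trans (hkle (ℓ-1) ℓ (by omega) hℓt) hkℓd
  -- sup at τ ℓ
  have hSτ : ((Finset.range (d + 1)).sup' Finset.nonempty_range_add_one
      fun j => ‖p j‖ * τ ℓ ^ j) = ‖p (k ℓ)‖ * τ ℓ ^ (k ℓ) := by
    apply le_antisymm
    · apply Finset.sup'_le
      intro j hjr
      exact hbound j (Nat.lt_succ_iff.mp (Finset.mem_range.mp hjr))
    · exact Finset.le_sup' (fun j => ‖p j‖ * τ ℓ ^ j)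
        (Finset.mem_range.mpr (Nat.lt_succ_of_le hkℓd))
  -- the key pointwise inequality
  have key : ∀ x : ℝ, 0 < x →
      ((Finset.range (d + 1)).sup' Finset.nonempty_range_add_one
          fun j => ‖p j‖ * τ ℓ ^ j) / (‖p i‖ * τ ℓ ^ i) ≤
      ((Finset.range (d + 1)).sup' Finset.nonempty_range_add_one
          fun j => ‖p j‖ * x ^ j) / (‖p i‖ * x ^ i) := by
    intro x hx
    rw [div_le_div_iff₀ (by positivity) (by positivity)]
    rcases le_total x (τ ℓ) with hcase | hcase
    · have hSx : ‖p (k (ℓ-1))‖ * x ^ (k (ℓ-1))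
          ≤ (Finset.range (d + 1)).sup' Finset.nonempty_range_add_one
            fun j => ‖p j‖ * x ^ j :=
        Finset.le_sup' (fun j => ‖p j‖ * x ^ j)
          (Finset.mem_range.mpr (Nat.lt_succ_of_le hkℓ1d))
      have hcore : τ ℓ ^ (k (ℓ-1)) * x ^ i ≤ x ^ (k (ℓ-1)) * τ ℓ ^ i := by
        have h1 : x ^ (i - k (ℓ-1)) ≤ τ ℓ ^ (i - k (ℓ-1)) := pow_le_pow_left₀ hx.le hcase _
        calc τ ℓ ^ (k (ℓ-1)) * x ^ i
            = (τ ℓ ^ (k (ℓ-1)) * x ^ (k (ℓ-1))) * x ^ (i - k (ℓ-1)) := by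
              rw [mul_assoc, ← pow_add, show k (ℓ-1) + (i - k (ℓ-1)) = i from by omega]
          _ ≤ (τ ℓ ^ (k (ℓ-1)) * x ^ (k (ℓ-1))) * τ ℓ ^ (i - k (ℓ-1)) :=
              mul_le_mul_of_nonneg_left h1 (by positivity)
          _ = x ^ (k (ℓ-1)) * (τ ℓ ^ (k (ℓ-1)) * τ ℓ ^ (i - k (ℓ-1))) := by ring
          _ = x ^ (k (ℓ-1)) * τ ℓ ^ i := by
              rw [← pow_add, show k (ℓ-1) + (i - k (ℓ-1)) = i from by omega]
      calc ((Finset.range (d + 1)).sup' Finset.nonempty_range_add_one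
              fun j => ‖p j‖ * τ ℓ ^ j) * (‖p i‖ * x ^ i)
          = (‖p (k (ℓ-1))‖ * τ ℓ ^ (k (ℓ-1))) * (‖p i‖ * x ^ i) := by
            rw [hSτ, ← hEq]
        _ = (‖p (k (ℓ-1))‖ * ‖p i‖) * (τ ℓ ^ (k (ℓ-1)) * x ^ i) := by
            ring
        _ ≤ (‖p (k (ℓ-1))‖ * ‖p i‖) * (x ^ (k (ℓ-1)) * τ ℓ ^ i) :=
            mul_le_mul_of_nonneg_left hcore (mul_nonneg (hAnn _) (hAnn _))
        _ = (‖p (k (ℓ-1))‖ * x ^ (k (ℓ-1))) * (‖p i‖ * τ ℓ ^ i) := by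
            ring
        _ ≤ ((Finset.range (d + 1)).sup' Finset.nonempty_range_add_one
              fun j => ‖p j‖ * x ^ j) * (‖p i‖ * τ ℓ ^ i) :=
            mul_le_mul_of_nonneg_right hSx (by positivity)
    · have hSx : ‖p (k ℓ)‖ * x ^ (k ℓ)
          ≤ (Finset.range (d + 1)).sup' Finset.nonempty_range_add_one
            fun j => ‖p j‖ * x ^ j :=
        Finset.le_sup' (fun j => ‖p j‖ * x ^ j)
          (Finset.mem_range.mpr (Nat.lt_succ_of_le hkℓd))
      have hcore : τ ℓ ^ (k ℓ) * x ^ i ≤ x ^ (k ℓ) * τ ℓ ^ i := by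
        have h1 : τ ℓ ^ (k ℓ - i) ≤ x ^ (k ℓ - i) := pow_le_pow_left₀ hσpos.le hcase _
        calc τ ℓ ^ (k ℓ) * x ^ i
            = (τ ℓ ^ i * x ^ i) * τ ℓ ^ (k ℓ - i) := by
              rw [mul_comm (τ ℓ ^ i) (x ^ i), mul_assoc, mul_comm (τ ℓ ^ i) _, ← mul_assoc]
              rw [mul_assoc (x ^ i), ← pow_add, show k ℓ - i + i = k ℓ from by omega]
              ring
          _ ≤ (τ ℓ ^ i * x ^ i) * x ^ (k ℓ - i) :=
              mul_le_mul_of_nonneg_left h1 (by positivity)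
          _ = x ^ (k ℓ) * τ ℓ ^ i := by
              rw [mul_comm (τ ℓ ^ i) (x ^ i), mul_assoc, mul_comm (τ ℓ ^ i) _, ← mul_assoc,
                ← pow_add, show i + (k ℓ - i) = k ℓ from by omega]
      calc ((Finset.range (d + 1)).sup' Finset.nonempty_range_add_one
              fun j => ‖p j‖ * τ ℓ ^ j) * (‖p i‖ * x ^ i)
          = (‖p (k ℓ)‖ * τ ℓ ^ (k ℓ)) * (‖p i‖ * x ^ i) := by
            rw [hSτ]
        _ = (‖p (k ℓ)‖ * ‖p i‖) * (τ ℓ ^ (k ℓ) * x ^ i) := by ring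
        _ ≤ (‖p (k ℓ)‖ * ‖p i‖) * (x ^ (k ℓ) * τ ℓ ^ i) :=
            mul_le_mul_of_nonneg_left hcore (mul_nonneg (hAnn _) (hAnn _))
        _ = (‖p (k ℓ)‖ * x ^ (k ℓ)) * (‖p i‖ * τ ℓ ^ i) := by ring
        _ ≤ ((Finset.range (d + 1)).sup' Finset.nonempty_range_add_one
              fun j => ‖p j‖ * x ^ j) * (‖p i‖ * τ ℓ ^ i) :=
            mul_le_mul_of_nonneg_right hSx (by positivity)
  refine ⟨key, ?_, ?_, ?_⟩
  · -- sInf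
    have hmem : ((Finset.range (d + 1)).sup' Finset.nonempty_range_add_one
        fun j => ‖p j‖ * τ ℓ ^ j) / (‖p i‖ * τ ℓ ^ i) ∈
        {y : ℝ | ∃ x : ℝ, 0 < x ∧
          y = ((Finset.range (d + 1)).sup' Finset.nonempty_range_add_one
              fun j => ‖p j‖ * x ^ j) / (‖p i‖ * x ^ i)} :=
      ⟨τ ℓ, hσpos, rfl⟩
    have hlb : ∀ y ∈ {y : ℝ | ∃ x : ℝ, 0 < x ∧
          y = ((Finset.range (d + 1)).sup' Finset.nonempty_range_add_one
              fun j => ‖p j‖ * x ^ j) / (‖p i‖ * x ^ i)},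
        ((Finset.range (d + 1)).sup' Finset.nonempty_range_add_one
          fun j => ‖p j‖ * τ ℓ ^ j) / (‖p i‖ * τ ℓ ^ i) ≤ y := by
      rintro y ⟨x, hx, rfl⟩
      exact key x hx
    exact le_antisymm (csInf_le ⟨_, fun y hy => hlb y hy⟩ hmem) (le_csInf ⟨_, hmem⟩ hlb)
  · rw [hSτ, ← hEq]
  · rw [hEq]
end

section
/- Let 1 ≤ ℓ ≤ t and let i satisfy k_{ℓ−1} ≤ i ≤ k_ℓ and p_i = 0. Then for every x > 0, (max_{0≤j≤d} |p_j| x^j)/x^i ≥ (max_{0≤j≤d} |p_j| τ_ℓ^j)/τ_ℓ^i, and consequently γ_i := inf_{x>0} (max_{0≤j≤d} |p_j| x^j)/x^i is attained at x = τ_ℓ and equals |p_{k_{ℓ−1}}| τ_ℓ^{k_{ℓ−1}−i} = |p_{k_ℓ}| τ_ℓ^{k_ℓ−i}. -/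
/-- Let `1 ≤ ℓ ≤ t` and let `i` satisfy `k_{ℓ−1} ≤ i ≤ k_ℓ` and `p_i = 0`. Then
for every `x > 0`, `(max_{0≤j≤d} |p_j| x^j)/x^i ≥ (max_{0≤j≤d} |p_j| τ_ℓ^j)/τ_ℓ^i`, and
consequently `γ_i := inf_{x>0} (max_{0≤j≤d} |p_j| x^j)/x^i` is attained at `x = τ_ℓ` and
equals `|p_{k_{ℓ−1}}| τ_ℓ^{k_{ℓ−1}−i} = |p_{k_ℓ}| τ_ℓ^{k_ℓ−i}` (the possibly negative
exponents are written with divisions). -/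
theorem gamma_attained_at_tropical_root_zero_coeff
    (d t : ℕ) (p : ℕ → ℂ) (hp0 : p 0 ≠ 0) (hpd : p d ≠ 0)
    (k : ℕ → ℕ) (hk0 : k 0 = 0) (hkt : k t = d)
    (hkmono : ∀ ℓ, ℓ < t → k ℓ < k (ℓ + 1))
    (hpk : ∀ ℓ, ℓ ≤ t → p (k ℓ) ≠ 0)
    (τ : ℕ → ℝ)
    (hτ : ∀ ℓ, 1 ≤ ℓ → ℓ ≤ t →
      τ ℓ = (‖p (k (ℓ - 1))‖ / ‖p (k ℓ)‖) ^
            (1 / ((k ℓ - k (ℓ - 1) : ℕ) : ℝ)))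
    (hτmono : ∀ ℓ, 1 ≤ ℓ → ℓ < t → τ ℓ < τ (ℓ + 1))
    (hhull : ∀ ℓ, 1 ≤ ℓ → ℓ ≤ t → ∀ j, k (ℓ - 1) ≤ j → j ≤ k ℓ →
      ‖p j‖ * τ ℓ ^ j ≤ ‖p (k ℓ)‖ * τ ℓ ^ (k ℓ))
    (ℓ i : ℕ) (hℓ1 : 1 ≤ ℓ) (hℓt : ℓ ≤ t)
    (hi1 : k (ℓ - 1) ≤ i) (hi2 : i ≤ k ℓ) (hpi : p i = 0) :
    (∀ x : ℝ, 0 < x →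
      ((Finset.range (d + 1)).sup' Finset.nonempty_range_add_one
          fun j => ‖p j‖ * τ ℓ ^ j) / τ ℓ ^ i ≤
      ((Finset.range (d + 1)).sup' Finset.nonempty_range_add_one
          fun j => ‖p j‖ * x ^ j) / x ^ i) ∧
    sInf {y : ℝ | ∃ x : ℝ, 0 < x ∧
        y = ((Finset.range (d + 1)).sup' Finset.nonempty_range_add_one
            fun j => ‖p j‖ * x ^ j) / x ^ i} =
      ((Finset.range (d + 1)).sup' Finset.nonempty_range_add_one
          fun j => ‖p j‖ * τ ℓ ^ j) / τ ℓ ^ i ∧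
    ((Finset.range (d + 1)).sup' Finset.nonempty_range_add_one
        fun j => ‖p j‖ * τ ℓ ^ j) / τ ℓ ^ i =
      ‖p (k (ℓ - 1))‖ * τ ℓ ^ (k (ℓ - 1)) / τ ℓ ^ i ∧
    ‖p (k (ℓ - 1))‖ * τ ℓ ^ (k (ℓ - 1)) / τ ℓ ^ i =
      ‖p (k ℓ)‖ * τ ℓ ^ (k ℓ) / τ ℓ ^ i := by
  classical
  -- positivity of coefficient absolute values at vertices
  have habs : ∀ m, m ≤ t → 0 < ‖p (k m)‖ := fun m hm => norm_pos_iff.mpr (hpk m hm)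
  have hτpos : ∀ m, 1 ≤ m → m ≤ t → 0 < τ m := by
    intro m h1 h2
    rw [hτ m h1 h2]
    exact Real.rpow_pos_of_pos (div_pos (habs _ (by omega)) (habs _ h2)) _
  have hklt : ∀ m, 1 ≤ m → m ≤ t → k (m - 1) < k m := by
    intro m h1 h2
    have := hkmono (m - 1) (by omega)
    rwa [Nat.sub_add_cancel h1] at this
  have hkey : ∀ m, 1 ≤ m → m ≤ t →
      ‖p (k (m - 1))‖ * τ m ^ (k (m - 1)) =
      ‖p (k m)‖ * τ m ^ (k m) := by
    intro m hm1 hmt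
    have ha := habs (m - 1) (by omega)
    have hb := habs m hmt
    have hc : (k m - k (m - 1) : ℕ) ≠ 0 := by have := hklt m hm1 hmt; omega
    have hpow : τ m ^ (k m - k (m - 1)) =
        ‖p (k (m - 1))‖ / ‖p (k m)‖ := by
      rw [hτ m hm1 hmt,
        ← Real.rpow_natCast ((‖p (k (m - 1))‖ / ‖p (k m)‖) ^
          (1 / ((k m - k (m - 1) : ℕ) : ℝ))) (k m - k (m - 1)),
        ← Real.rpow_mul (by positivity), one_div,
        inv_mul_cancel₀ (Nat.cast_ne_zero.mpr hc), Real.rpow_one]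
    have e : τ m ^ (k m) = τ m ^ (k (m - 1)) * τ m ^ (k m - k (m - 1)) := by
      rw [← pow_add]; congr 1; omega
    rw [e, hpow]
    field_simp
  have hτle : ∀ a b, 1 ≤ a → a ≤ b → b ≤ t → τ a ≤ τ b := by
    intro a b ha
    induction b with
    | zero => intro h _; omega
    | succ n ih =>
      intro hab hbt
      rcases Nat.lt_or_ge n a with h | h
      · have : a = n + 1 := by omega
        rw [this]
      · exact (ih h (by omega)).trans (hτmono n (by omega) (by omega)).le
  have hkmono' : ∀ a b, a ≤ b → b ≤ t → k a ≤ k b := by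
    intro a b
    induction b with
    | zero => intro h _; rw [Nat.le_zero.mp h]
    | succ n ih =>
      intro hab hbt
      rcases Nat.lt_or_ge n a with h | h
      · have : a = n + 1 := by omega
        rw [this]
      · exact (ih h (by omega)).trans (hkmono n (by omega)).le
  -- L1: left of tropical root, left endpoint dominates the segment
  have L1 : ∀ m, 1 ≤ m → m ≤ t → ∀ x : ℝ, 0 < x → x ≤ τ m → ∀ j, k (m - 1) ≤ j → j ≤ k m →
      ‖p j‖ * x ^ j ≤ ‖p (k (m - 1))‖ * x ^ (k (m - 1)) := by
    intro m hm1 hmt x hx hxτ j hja hjb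
    have hτm := hτpos m hm1 hmt
    have h1 : ‖p j‖ * τ m ^ j ≤
        ‖p (k (m - 1))‖ * τ m ^ (k (m - 1)) := by
      rw [hkey m hm1 hmt]; exact hhull m hm1 hmt j hja hjb
    have e1 : τ m ^ j = τ m ^ (k (m - 1)) * τ m ^ (j - k (m - 1)) := by
      rw [← pow_add]; congr 1; omega
    have h2 : ‖p j‖ * τ m ^ (j - k (m - 1)) ≤ ‖p (k (m - 1))‖ := by
      have h1' : (‖p j‖ * τ m ^ (j - k (m - 1))) * τ m ^ (k (m - 1)) ≤
          ‖p (k (m - 1))‖ * τ m ^ (k (m - 1)) := by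
        calc (‖p j‖ * τ m ^ (j - k (m - 1))) * τ m ^ (k (m - 1))
            = ‖p j‖ * τ m ^ j := by rw [e1]; ring
          _ ≤ _ := h1
      exact le_of_mul_le_mul_right h1' (pow_pos hτm _)
    have e2 : x ^ j = x ^ (k (m - 1)) * x ^ (j - k (m - 1)) := by
      rw [← pow_add]; congr 1; omega
    calc ‖p j‖ * x ^ j
        = (‖p j‖ * x ^ (j - k (m - 1))) * x ^ (k (m - 1)) := by rw [e2]; ring
      _ ≤ ‖p (k (m - 1))‖ * x ^ (k (m - 1)) := by
          apply mul_le_mul_of_nonneg_right _ (pow_pos hx _).le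
          calc ‖p j‖ * x ^ (j - k (m - 1))
              ≤ ‖p j‖ * τ m ^ (j - k (m - 1)) := by
                exact mul_le_mul_of_nonneg_left (pow_le_pow_left₀ hx.le hxτ _)
                  (norm_nonneg _)
            _ ≤ _ := h2
  -- L2: right of tropical root, right endpoint dominates the segment
  have L2 : ∀ m, 1 ≤ m → m ≤ t → ∀ x : ℝ, 0 < x → τ m ≤ x → ∀ j, k (m - 1) ≤ j → j ≤ k m →
      ‖p j‖ * x ^ j ≤ ‖p (k m)‖ * x ^ (k m) := by
    intro m hm1 hmt x hx hxτ j hja hjb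
    have hτm := hτpos m hm1 hmt
    have h1 := hhull m hm1 hmt j hja hjb
    have e1 : τ m ^ (k m) = τ m ^ j * τ m ^ (k m - j) := by
      rw [← pow_add]; congr 1; omega
    have h2 : ‖p j‖ ≤ ‖p (k m)‖ * τ m ^ (k m - j) := by
      have h1' : ‖p j‖ * τ m ^ j ≤
          (‖p (k m)‖ * τ m ^ (k m - j)) * τ m ^ j := by
        calc ‖p j‖ * τ m ^ j ≤ ‖p (k m)‖ * τ m ^ (k m) := h1
          _ = _ := by rw [e1]; ring
      exact le_of_mul_le_mul_right h1' (pow_pos hτm _)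
    have e2 : x ^ (k m) = x ^ j * x ^ (k m - j) := by
      rw [← pow_add]; congr 1; omega
    calc ‖p j‖ * x ^ j
        ≤ (‖p (k m)‖ * τ m ^ (k m - j)) * x ^ j :=
          mul_le_mul_of_nonneg_right h2 (pow_pos hx _).le
      _ ≤ (‖p (k m)‖ * x ^ (k m - j)) * x ^ j := by
          apply mul_le_mul_of_nonneg_right _ (pow_pos hx _).le
          exact mul_le_mul_of_nonneg_left (pow_le_pow_left₀ hτm.le hxτ _)
            (norm_nonneg _)
      _ = ‖p (k m)‖ * x ^ (k m) := by rw [e2]; ring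
  have hτ0pos : 0 < τ ℓ := hτpos ℓ hℓ1 hℓt
  -- chains
  have C1 : ∀ n, ℓ + n ≤ t → ∀ x : ℝ, 0 < x → x ≤ τ ℓ →
      ‖p (k (ℓ + n))‖ * x ^ (k (ℓ + n)) ≤
      ‖p (k ℓ)‖ * x ^ (k ℓ) := by
    intro n
    induction n with
    | zero => intro _ x _ _; exact le_rfl
    | succ n ih =>
      intro hnt x hx hxτ
      have hx2 : x ≤ τ (ℓ + n + 1) := hxτ.trans (hτle ℓ (ℓ + n + 1) hℓ1 (by omega) hnt)
      have h1 := L1 (ℓ + n + 1) (by omega) hnt x hx hx2 (k (ℓ + n + 1))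
        (hkmono' (ℓ + n + 1 - 1) (ℓ + n + 1) (by omega) hnt) le_rfl
      simp only [Nat.add_sub_cancel] at h1
      exact h1.trans (ih (by omega) x hx hxτ)
  have C2 : ∀ n, n ≤ ℓ → ∀ x : ℝ, 0 < x → τ ℓ ≤ x →
      ‖p (k (ℓ - n))‖ * x ^ (k (ℓ - n)) ≤
      ‖p (k ℓ)‖ * x ^ (k ℓ) := by
    intro n
    induction n with
    | zero => intro _ x _ _; exact le_rfl
    | succ n ih =>
      intro hnℓ x hx hxτ
      have hm1 : 1 ≤ ℓ - n := by omega
      have hmt : ℓ - n ≤ t := by omega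
      have hx2 : τ (ℓ - n) ≤ x := (hτle (ℓ - n) ℓ hm1 (by omega) hℓt).trans hxτ
      have h1 := L2 (ℓ - n) hm1 hmt x hx hx2 (k (ℓ - n - 1)) le_rfl
        (hkmono' (ℓ - n - 1) (ℓ - n) (by omega) hmt)
      have h2 := ih (by omega) x hx hxτ
      rw [show (ℓ - (n + 1)) = (ℓ - n - 1) from by omega]
      exact h1.trans h2
  -- segment finding
  have hseg : ∀ j, j ≤ d → ∃ m, 1 ≤ m ∧ m ≤ t ∧ k (m - 1) ≤ j ∧ j ≤ k m := by
    intro j hj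
    have hex : ∃ m, 1 ≤ m ∧ j ≤ k m := ⟨t, by omega, by rw [hkt]; exact hj⟩
    have hs := Nat.find_spec hex
    have hmt : Nat.find hex ≤ t := Nat.find_min' hex ⟨by omega, by rw [hkt]; exact hj⟩
    refine ⟨Nat.find hex, hs.1, hmt, ?_, hs.2⟩
    rcases Nat.eq_or_lt_of_le hs.1 with h1 | h1
    · rw [← h1]
      simp [hk0]
    · have hmin := Nat.find_min hex (m := Nat.find hex - 1) (by omega)
      by_contra hcon
      push_neg at hcon
      exact hmin ⟨by omega, by omega⟩
  have hbd : k ℓ ≤ d := by rw [← hkt]; exact hkmono' ℓ t hℓt le_rfl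
  have had : k (ℓ - 1) ≤ d := le_trans (hkmono' (ℓ - 1) ℓ (by omega) hℓt) hbd
  -- at τ ℓ, the max is attained at k ℓ
  have hptτ : ∀ j, j ≤ d → ‖p j‖ * τ ℓ ^ j ≤
      ‖p (k ℓ)‖ * τ ℓ ^ (k ℓ) := by
    intro j hj
    obtain ⟨m, hm1, hmt, hja, hjb⟩ := hseg j hj
    rcases le_or_gt m ℓ with hcase | hcase
    · have hx : τ m ≤ τ ℓ := hτle m ℓ hm1 hcase hℓt
      have h1 := L2 m hm1 hmt (τ ℓ) hτ0pos hx j hja hjb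
      have h2 := C2 (ℓ - m) (by omega) (τ ℓ) hτ0pos le_rfl
      rw [show ℓ - (ℓ - m) = m from by omega] at h2
      exact h1.trans h2
    · have hx : τ ℓ ≤ τ m := hτle ℓ m hℓ1 hcase.le hmt
      have h1 := L1 m (by omega) hmt (τ ℓ) hτ0pos hx j hja hjb
      have h2 := C1 (m - 1 - ℓ) (by omega) (τ ℓ) hτ0pos le_rfl
      rw [show ℓ + (m - 1 - ℓ) = m - 1 from by omega] at h2
      exact h1.trans h2
  have Msup : ((Finset.range (d + 1)).sup' Finset.nonempty_range_add_one
      fun j => ‖p j‖ * τ ℓ ^ j) = ‖p (k ℓ)‖ * τ ℓ ^ (k ℓ) := by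
    apply le_antisymm
    · apply Finset.sup'_le
      intro j hj
      exact hptτ j (by have := Finset.mem_range.mp hj; omega)
    · exact Finset.le_sup' (fun j => ‖p j‖ * τ ℓ ^ j)
        (Finset.mem_range.mpr (Nat.lt_succ_of_le hbd))
  -- main lower bound
  have hlow : ∀ x : ℝ, 0 < x →
      ‖p (k ℓ)‖ * τ ℓ ^ (k ℓ) / τ ℓ ^ i ≤
      ((Finset.range (d + 1)).sup' Finset.nonempty_range_add_one
        fun j => ‖p j‖ * x ^ j) / x ^ i := by
    intro x hx
    rcases le_total x (τ ℓ) with hc | hc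
    · have h1 : ‖p (k (ℓ - 1))‖ * x ^ (k (ℓ - 1)) ≤
          (Finset.range (d + 1)).sup' Finset.nonempty_range_add_one
            (fun j => ‖p j‖ * x ^ j) :=
        Finset.le_sup' (fun j => ‖p j‖ * x ^ j)
          (Finset.mem_range.mpr (Nat.lt_succ_of_le had))
      have h2 : ‖p (k (ℓ - 1))‖ * τ ℓ ^ (k (ℓ - 1)) / τ ℓ ^ i ≤
          ‖p (k (ℓ - 1))‖ * x ^ (k (ℓ - 1)) / x ^ i := by
        rw [div_le_div_iff₀ (pow_pos hτ0pos i) (pow_pos hx i)]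
        have ex : x ^ i = x ^ (k (ℓ - 1)) * x ^ (i - k (ℓ - 1)) := by
          rw [← pow_add]; congr 1; omega
        have eτ : τ ℓ ^ i = τ ℓ ^ (k (ℓ - 1)) * τ ℓ ^ (i - k (ℓ - 1)) := by
          rw [← pow_add]; congr 1; omega
        rw [ex, eτ]
        calc ‖p (k (ℓ - 1))‖ * τ ℓ ^ (k (ℓ - 1)) *
              (x ^ (k (ℓ - 1)) * x ^ (i - k (ℓ - 1)))
            = (‖p (k (ℓ - 1))‖ * τ ℓ ^ (k (ℓ - 1)) * x ^ (k (ℓ - 1))) *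
              x ^ (i - k (ℓ - 1)) := by ring
          _ ≤ (‖p (k (ℓ - 1))‖ * τ ℓ ^ (k (ℓ - 1)) * x ^ (k (ℓ - 1))) *
              τ ℓ ^ (i - k (ℓ - 1)) := by
              apply mul_le_mul_of_nonneg_left (pow_le_pow_left₀ hx.le hc _)
              positivity
          _ = ‖p (k (ℓ - 1))‖ * x ^ (k (ℓ - 1)) *
              (τ ℓ ^ (k (ℓ - 1)) * τ ℓ ^ (i - k (ℓ - 1))) := by ring
      calc ‖p (k ℓ)‖ * τ ℓ ^ (k ℓ) / τ ℓ ^ i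
          = ‖p (k (ℓ - 1))‖ * τ ℓ ^ (k (ℓ - 1)) / τ ℓ ^ i := by
            rw [hkey ℓ hℓ1 hℓt]
        _ ≤ ‖p (k (ℓ - 1))‖ * x ^ (k (ℓ - 1)) / x ^ i := h2
        _ ≤ _ := by gcongr
    · have h1 : ‖p (k ℓ)‖ * x ^ (k ℓ) ≤
          (Finset.range (d + 1)).sup' Finset.nonempty_range_add_one
            (fun j => ‖p j‖ * x ^ j) :=
        Finset.le_sup' (fun j => ‖p j‖ * x ^ j)
          (Finset.mem_range.mpr (Nat.lt_succ_of_le hbd))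
      have h2 : ‖p (k ℓ)‖ * τ ℓ ^ (k ℓ) / τ ℓ ^ i ≤
          ‖p (k ℓ)‖ * x ^ (k ℓ) / x ^ i := by
        rw [div_le_div_iff₀ (pow_pos hτ0pos i) (pow_pos hx i)]
        have ex : x ^ (k ℓ) = x ^ i * x ^ (k ℓ - i) := by
          rw [← pow_add]; congr 1; omega
        have eτ : τ ℓ ^ (k ℓ) = τ ℓ ^ i * τ ℓ ^ (k ℓ - i) := by
          rw [← pow_add]; congr 1; omega
        rw [ex, eτ]
        calc ‖p (k ℓ)‖ * (τ ℓ ^ i * τ ℓ ^ (k ℓ - i)) * x ^ i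
            = (‖p (k ℓ)‖ * τ ℓ ^ i * x ^ i) * τ ℓ ^ (k ℓ - i) := by ring
          _ ≤ (‖p (k ℓ)‖ * τ ℓ ^ i * x ^ i) * x ^ (k ℓ - i) := by
              apply mul_le_mul_of_nonneg_left (pow_le_pow_left₀ hτ0pos.le hc _)
              positivity
          _ = ‖p (k ℓ)‖ * (x ^ i * x ^ (k ℓ - i)) * τ ℓ ^ i := by ring
      calc ‖p (k ℓ)‖ * τ ℓ ^ (k ℓ) / τ ℓ ^ i
          ≤ ‖p (k ℓ)‖ * x ^ (k ℓ) / x ^ i := h2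
        _ ≤ _ := by gcongr
  refine ⟨?_, ?_, ?_, ?_⟩
  · intro x hx
    rw [Msup]
    exact hlow x hx
  · apply IsLeast.csInf_eq
    constructor
    · exact ⟨τ ℓ, hτ0pos, rfl⟩
    · rintro y ⟨x, hx, rfl⟩
      rw [Msup]
      exact hlow x hx
  · rw [Msup, hkey ℓ hℓ1 hℓt]
  · rw [hkey ℓ hℓ1 hℓt]
end

section
/- On each interval between consecutive tropical roots, the max-times polynomial is given by the monomial of the corresponding Newton-polygon vertex: (a) for 0 < x ≤ τ_1, max_{0≤j≤d} |p_j| x^j = |p_0|; (b) for 1 ≤ ℓ ≤ t−1 and τ_ℓ ≤ x ≤ τ_{ℓ+1}, max_{0≤j≤d} |p_j| x^j = |p_{k_ℓ}| x^{k_ℓ}; (c) for x ≥ τ_t, max_{0≤j≤d} |p_j| x^j = |p_d| x^d. -/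
private lemma scale_up {a b x τ : ℝ} {j K : ℕ} (hb : 0 ≤ b) (hτ : 0 < τ)
    (hx : τ ≤ x) (hjK : j ≤ K) (h : a * τ ^ j ≤ b * τ ^ K) :
    a * x ^ j ≤ b * x ^ K := by
  have hr : (1:ℝ) ≤ x / τ := (one_le_div hτ).2 hx
  have hxe : x = τ * (x / τ) := by field_simp
  rw [hxe, mul_pow, mul_pow, ← mul_assoc, ← mul_assoc]
  calc a * τ ^ j * (x / τ) ^ j ≤ b * τ ^ K * (x / τ) ^ j :=
        mul_le_mul_of_nonneg_right h (by positivity)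
    _ ≤ b * τ ^ K * (x / τ) ^ K :=
        mul_le_mul_of_nonneg_left (pow_le_pow_right₀ hr hjK) (by positivity)

private lemma scale_down {a b x τ : ℝ} {j K : ℕ} (hb : 0 ≤ b) (hx0 : 0 < x)
    (hτ : 0 < τ) (hx : x ≤ τ) (hKj : K ≤ j) (h : a * τ ^ j ≤ b * τ ^ K) :
    a * x ^ j ≤ b * x ^ K := by
  have hr1 : x / τ ≤ 1 := (div_le_one hτ).2 hx
  have hr0 : (0:ℝ) ≤ x / τ := by positivity
  have hxe : x = τ * (x / τ) := by field_simp
  rw [hxe, mul_pow, mul_pow, ← mul_assoc, ← mul_assoc]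
  calc a * τ ^ j * (x / τ) ^ j ≤ b * τ ^ K * (x / τ) ^ j :=
        mul_le_mul_of_nonneg_right h (by positivity)
    _ ≤ b * τ ^ K * (x / τ) ^ K :=
        mul_le_mul_of_nonneg_left (pow_le_pow_of_le_one hr0 hr1 hKj) (by positivity)

/-- On each interval between consecutive tropical roots, the max-times polynomial
is given by the monomial of the corresponding Newton-polygon vertex:
(a) for `0 < x ≤ τ_1`, `max_{0≤j≤d} |p_j| x^j = |p_0|`;
(b) for `1 ≤ ℓ ≤ t−1` and `τ_ℓ ≤ x ≤ τ_{ℓ+1}`, `max_{0≤j≤d} |p_j| x^j = |p_{k_ℓ}| x^{k_ℓ}`;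
(c) for `x ≥ τ_t`, `max_{0≤j≤d} |p_j| x^j = |p_d| x^d`. -/
theorem maxtimes_polynomial_piecewise
    (d t : ℕ) (ht : 1 ≤ t) (p : ℕ → ℂ) (hp0 : p 0 ≠ 0) (hpd : p d ≠ 0)
    (k : ℕ → ℕ) (hk0 : k 0 = 0) (hkt : k t = d)
    (hkmono : ∀ ℓ, ℓ < t → k ℓ < k (ℓ + 1))
    (hpk : ∀ ℓ, ℓ ≤ t → p (k ℓ) ≠ 0)
    (τ : ℕ → ℝ)
    (hτ : ∀ ℓ, 1 ≤ ℓ → ℓ ≤ t →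
      τ ℓ = (‖p (k (ℓ - 1))‖ / ‖p (k ℓ)‖) ^
            (1 / ((k ℓ - k (ℓ - 1) : ℕ) : ℝ)))
    (hτmono : ∀ ℓ, 1 ≤ ℓ → ℓ < t → τ ℓ < τ (ℓ + 1))
    (hhull : ∀ ℓ, 1 ≤ ℓ → ℓ ≤ t → ∀ j, k (ℓ - 1) ≤ j → j ≤ k ℓ →
      ‖p j‖ * τ ℓ ^ j ≤ ‖p (k ℓ)‖ * τ ℓ ^ (k ℓ)) :
    (∀ x : ℝ, 0 < x → x ≤ τ 1 →
      ((Finset.range (d + 1)).sup' Finset.nonempty_range_add_one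
          fun j => ‖p j‖ * x ^ j) = ‖p 0‖) ∧
    (∀ ℓ, 1 ≤ ℓ → ℓ < t → ∀ x : ℝ, τ ℓ ≤ x → x ≤ τ (ℓ + 1) →
      ((Finset.range (d + 1)).sup' Finset.nonempty_range_add_one
          fun j => ‖p j‖ * x ^ j) = ‖p (k ℓ)‖ * x ^ (k ℓ)) ∧
    (∀ x : ℝ, τ t ≤ x →
      ((Finset.range (d + 1)).sup' Finset.nonempty_range_add_one
          fun j => ‖p j‖ * x ^ j) = ‖p d‖ * x ^ d) := by
  classical
  -- k is monotone up to t
  have kle : ∀ a b : ℕ, a ≤ b → b ≤ t → k a ≤ k b := by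
    intro a b hab hbt
    induction b, hab using Nat.le_induction with
    | base => exact le_refl _
    | succ n hn ih => exact le_trans (ih (by omega)) (le_of_lt (hkmono n (by omega)))
  have τpos : ∀ ℓ, 1 ≤ ℓ → ℓ ≤ t → 0 < τ ℓ := by
    intro ℓ h1 h2
    rw [hτ ℓ h1 h2]
    exact Real.rpow_pos_of_pos
      (div_pos (norm_pos_iff.mpr (hpk _ (by omega))) (norm_pos_iff.mpr (hpk _ h2))) _
  have τle : ∀ a b, 1 ≤ a → a ≤ b → b ≤ t → τ a ≤ τ b := by
    intro a b h1 hab hbt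
    induction b, hab using Nat.le_induction with
    | base => exact le_refl _
    | succ n hn ih => exact le_trans (ih (by omega)) (le_of_lt (hτmono n (by omega) (by omega)))
  have τeq : ∀ ℓ, 1 ≤ ℓ → ℓ ≤ t →
      ‖p (k (ℓ - 1))‖ * τ ℓ ^ (k (ℓ - 1))
        = ‖p (k ℓ)‖ * τ ℓ ^ (k ℓ) := by
    intro ℓ h1 h2
    have hklt : k (ℓ - 1) < k ℓ := by
      have h := hkmono (ℓ - 1) (by omega)
      have he : ℓ - 1 + 1 = ℓ := by omega
      rwa [he] at h
    set A := ‖p (k (ℓ - 1))‖ with hA'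
    set B := ‖p (k ℓ)‖ with hB'
    have hA : 0 < A := norm_pos_iff.mpr (hpk _ (by omega))
    have hB : 0 < B := norm_pos_iff.mpr (hpk _ h2)
    have hm : ((k ℓ - k (ℓ - 1) : ℕ) : ℝ) ≠ 0 :=
      Nat.cast_ne_zero.mpr (by omega)
    have hpow : τ ℓ ^ (k ℓ - k (ℓ - 1)) = A / B := by
      rw [hτ ℓ h1 h2, ← Real.rpow_natCast ((A / B) ^ (1 / ((k ℓ - k (ℓ - 1) : ℕ) : ℝ))),
        ← Real.rpow_mul (le_of_lt (div_pos hA hB)), one_div,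
        inv_mul_cancel₀ hm, Real.rpow_one]
    have hkk : k ℓ = k (ℓ - 1) + (k ℓ - k (ℓ - 1)) := by omega
    rw [hkk, pow_add, hpow]
    field_simp
  -- main bound
  have main : ∀ ℓ, ℓ ≤ t → ∀ x : ℝ, 0 < x → (1 ≤ ℓ → τ ℓ ≤ x) → (ℓ < t → x ≤ τ (ℓ + 1)) →
      ∀ j, j ≤ d → ‖p j‖ * x ^ j ≤ ‖p (k ℓ)‖ * x ^ (k ℓ) := by
    intro ℓ hℓt x hx hxlo hxhi j hj
    -- single-segment steps
    have up_step : ∀ n, 1 ≤ n → n ≤ t → τ n ≤ x → ∀ i, k (n - 1) ≤ i → i ≤ k n →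
        ‖p i‖ * x ^ i ≤ ‖p (k n)‖ * x ^ (k n) := by
      intro n h1 h2 hτx i hi1 hi2
      exact scale_up (norm_nonneg _) (τpos n h1 h2) hτx hi2
        (hhull n h1 h2 i hi1 hi2)
    have down_step : ∀ n, 1 ≤ n → n ≤ t → x ≤ τ n → ∀ i, k (n - 1) ≤ i → i ≤ k n →
        ‖p i‖ * x ^ i ≤ ‖p (k (n - 1))‖ * x ^ (k (n - 1)) := by
      intro n h1 h2 hτx i hi1 hi2
      refine scale_down (norm_nonneg _) hx (τpos n h1 h2) hτx hi1 ?_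
      calc ‖p i‖ * τ n ^ i ≤ ‖p (k n)‖ * τ n ^ (k n) :=
            hhull n h1 h2 i hi1 hi2
        _ = ‖p (k (n - 1))‖ * τ n ^ (k (n - 1)) := (τeq n h1 h2).symm
    -- chains
    have chain_up : ∀ a b, a ≤ b → b ≤ ℓ →
        ‖p (k a)‖ * x ^ (k a) ≤ ‖p (k b)‖ * x ^ (k b) := by
      intro a b hab
      induction b, hab using Nat.le_induction with
      | base => intro _; exact le_refl _
      | succ m hm ih =>
        intro hmℓ
        refine le_trans (ih (by omega)) ?_
        have hτx : τ (m + 1) ≤ x :=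
          le_trans (τle (m + 1) ℓ (by omega) (by omega) hℓt) (hxlo (by omega))
        have h := up_step (m + 1) (by omega) (by omega) hτx (k m)
        simp only [Nat.add_sub_cancel] at h
        exact h (le_refl _) (le_of_lt (hkmono m (by omega)))
    have chain_down : ∀ a b, a ≤ b → ℓ ≤ a → b ≤ t →
        ‖p (k b)‖ * x ^ (k b) ≤ ‖p (k a)‖ * x ^ (k a) := by
      intro a b hab
      induction b, hab using Nat.le_induction with
      | base => intro _ _; exact le_refl _
      | succ m hm ih =>
        intro hℓa hmt
        refine le_trans ?_ (ih hℓa (by omega))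
        have hℓlt : ℓ < t := by omega
        have hτx : x ≤ τ (m + 1) :=
          le_trans (hxhi hℓlt) (τle (ℓ + 1) (m + 1) (by omega) (by omega) (by omega))
        have h := down_step (m + 1) (by omega) (by omega) hτx (k (m + 1))
        simp only [Nat.add_sub_cancel] at h
        exact h (le_of_lt (hkmono m (by omega))) (le_refl _)
    -- find the segment containing j
    obtain ⟨m, hm1, hmt, hjlo, hjhi⟩ : ∃ m, 1 ≤ m ∧ m ≤ t ∧ k (m - 1) ≤ j ∧ j ≤ k m := by
      by_cases hj0 : j = 0
      · exact ⟨1, le_refl _, ht, by simp [hk0, hj0], by simp [hj0]⟩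
      · have hex : ∃ m, j ≤ k m := ⟨t, hkt ▸ hj⟩
        have hmk : j ≤ k (Nat.find hex) := Nat.find_spec hex
        have hmt' : Nat.find hex ≤ t := Nat.find_min' hex (hkt ▸ hj)
        have hm0 : Nat.find hex ≠ 0 := by
          intro h0
          rw [h0, hk0] at hmk; omega
        have hlt : ¬ j ≤ k (Nat.find hex - 1) := Nat.find_min hex (by omega)
        exact ⟨Nat.find hex, by omega, hmt', by omega, hmk⟩
    by_cases hcase : m ≤ ℓ
    · have hτx : τ m ≤ x :=
        le_trans (τle m ℓ hm1 hcase hℓt) (hxlo (by omega))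
      exact le_trans (up_step m hm1 hmt hτx j hjlo hjhi) (chain_up m ℓ hcase (le_refl _))
    · push_neg at hcase
      have hℓlt : ℓ < t := by omega
      have hτx : x ≤ τ m :=
        le_trans (hxhi hℓlt) (τle (ℓ + 1) m (by omega) (by omega) hmt)
      exact le_trans (down_step m hm1 hmt hτx j hjlo hjhi)
        (chain_down ℓ (m - 1) (by omega) (le_refl _) (by omega))
  -- sup' computation
  have sup_eq : ∀ ℓ, ℓ ≤ t → ∀ x : ℝ, 0 < x → (1 ≤ ℓ → τ ℓ ≤ x) → (ℓ < t → x ≤ τ (ℓ + 1)) →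
      ((Finset.range (d + 1)).sup' Finset.nonempty_range_add_one
        fun j => ‖p j‖ * x ^ j) = ‖p (k ℓ)‖ * x ^ (k ℓ) := by
    intro ℓ hℓ x hx h1 h2
    apply le_antisymm
    · apply Finset.sup'_le
      intro j hj
      exact main ℓ hℓ x hx h1 h2 j (by have := Finset.mem_range.mp hj; omega)
    · refine Finset.le_sup' (f := fun j => ‖p j‖ * x ^ j) ?_
      refine Finset.mem_range.mpr ?_
      have : k ℓ ≤ d := hkt ▸ kle ℓ t hℓ (le_refl t)
      omega
  refine ⟨?_, ?_, ?_⟩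
  · intro x hx hx1
    have h := sup_eq 0 (by omega) x hx (by omega) (fun _ => hx1)
    simpa [hk0] using h
  · intro ℓ h1 h2 x hlo hhi
    exact sup_eq ℓ (by omega) x (lt_of_lt_of_le (τpos ℓ h1 (by omega)) hlo)
      (fun _ => hlo) (fun _ => hhi)
  · intro x hx
    have hx0 : 0 < x := lt_of_lt_of_le (τpos t ht (le_refl t)) hx
    have h := sup_eq t (le_refl t) x hx0 (fun _ => hx) (fun h' => absurd h' (lt_irrefl t))
    simpa [hkt] using h
end

section
/- Let 1 ≤ ℓ ≤ t and let i satisfy k_{ℓ−1} ≤ i ≤ k_ℓ. Then: (i) for every x with 0 < x ≤ τ_ℓ, (max_{0≤j≤d} |p_j| x^j)/x^i ≥ |p_{k_{ℓ−1}}| τ_ℓ^{k_{ℓ−1}−i}; and (ii) for every x ≥ τ_ℓ, (max_{0≤j≤d} |p_j| x^j)/x^i ≥ |p_{k_ℓ}| τ_ℓ^{k_ℓ−i}. -/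
/-- Let `1 ≤ ℓ ≤ t` and let `i` satisfy `k_{ℓ−1} ≤ i ≤ k_ℓ`. Then:
(i) for every `x` with `0 < x ≤ τ_ℓ`, `(max_{0≤j≤d} |p_j| x^j)/x^i ≥ |p_{k_{ℓ−1}}| τ_ℓ^{k_{ℓ−1}−i}`;
(ii) for every `x ≥ τ_ℓ`, `(max_{0≤j≤d} |p_j| x^j)/x^i ≥ |p_{k_ℓ}| τ_ℓ^{k_ℓ−i}`
(the possibly negative exponents are written with divisions). -/
theorem maxtimes_lower_bounds_around_tropical_root
    (d t : ℕ) (p : ℕ → ℂ) (hp0 : p 0 ≠ 0) (hpd : p d ≠ 0)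
    (k : ℕ → ℕ) (hk0 : k 0 = 0) (hkt : k t = d)
    (hkmono : ∀ ℓ, ℓ < t → k ℓ < k (ℓ + 1))
    (hpk : ∀ ℓ, ℓ ≤ t → p (k ℓ) ≠ 0)
    (τ : ℕ → ℝ)
    (hτ : ∀ ℓ, 1 ≤ ℓ → ℓ ≤ t →
      τ ℓ = (‖p (k (ℓ - 1))‖ / ‖p (k ℓ)‖) ^
            (1 / ((k ℓ - k (ℓ - 1) : ℕ) : ℝ)))
    (hτmono : ∀ ℓ, 1 ≤ ℓ → ℓ < t → τ ℓ < τ (ℓ + 1))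
    (hhull : ∀ ℓ, 1 ≤ ℓ → ℓ ≤ t → ∀ j, k (ℓ - 1) ≤ j → j ≤ k ℓ →
      ‖p j‖ * τ ℓ ^ j ≤ ‖p (k ℓ)‖ * τ ℓ ^ (k ℓ))
    (ℓ i : ℕ) (hℓ1 : 1 ≤ ℓ) (hℓt : ℓ ≤ t)
    (hi1 : k (ℓ - 1) ≤ i) (hi2 : i ≤ k ℓ) :
    (∀ x : ℝ, 0 < x → x ≤ τ ℓ →
      ‖p (k (ℓ - 1))‖ * τ ℓ ^ (k (ℓ - 1)) / τ ℓ ^ i ≤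
      ((Finset.range (d + 1)).sup' Finset.nonempty_range_add_one
          fun j => ‖p j‖ * x ^ j) / x ^ i) ∧
    (∀ x : ℝ, τ ℓ ≤ x →
      ‖p (k ℓ)‖ * τ ℓ ^ (k ℓ) / τ ℓ ^ i ≤
      ((Finset.range (d + 1)).sup' Finset.nonempty_range_add_one
          fun j => ‖p j‖ * x ^ j) / x ^ i) := by

  have hτpos : 0 < τ ℓ := by
    rw [hτ ℓ hℓ1 hℓt]
    exact Real.rpow_pos_of_pos (div_pos
      (norm_pos_iff.mpr (hpk (ℓ - 1) (le_trans (Nat.sub_le ℓ 1) hℓt)))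
      (norm_pos_iff.mpr (hpk ℓ hℓt))) _
  have hmono : ∀ a b : ℕ, a ≤ b → b ≤ t → k a ≤ k b := by
    intro a b hab hbt
    induction hab with
    | refl => exact le_rfl
    | @step m h ih =>
      exact le_trans (ih (by omega)) (le_of_lt (hkmono m (by omega)))
  have hkld : k ℓ ≤ d := hkt ▸ hmono ℓ t hℓt le_rfl
  have hkl1d : k (ℓ - 1) ≤ d := le_trans (le_trans hi1 hi2) hkld
  constructor
  · intro x hx hxτ
    have h1 : ‖p (k (ℓ - 1))‖ * x ^ (k (ℓ - 1)) ≤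
        (Finset.range (d + 1)).sup' Finset.nonempty_range_add_one
          (fun j => ‖p j‖ * x ^ j) :=
      Finset.le_sup' (fun j => ‖p j‖ * x ^ j) (Finset.mem_range.2 (show k (ℓ - 1) < d + 1 by omega))
    have hS : (0:ℝ) ≤ (Finset.range (d + 1)).sup' Finset.nonempty_range_add_one
        (fun j => ‖p j‖ * x ^ j) := le_trans (by positivity) h1
    obtain ⟨n, rfl⟩ : ∃ n, i = k (ℓ - 1) + n := ⟨i - k (ℓ - 1), by omega⟩
    rw [div_le_div_iff₀ (by positivity) (by positivity)]
    have key : x ^ n ≤ τ ℓ ^ n := pow_le_pow_left₀ hx.le hxτ n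
    have h2 := mul_le_mul_of_nonneg_left
      (mul_le_mul h1 key (by positivity) hS) (pow_nonneg hτpos.le (k (ℓ - 1)))
    rw [pow_add, pow_add]
    nlinarith [h2]
  · intro x hτx
    have hx : (0:ℝ) < x := lt_of_lt_of_le hτpos hτx
    have h1 : ‖p (k ℓ)‖ * x ^ (k ℓ) ≤
        (Finset.range (d + 1)).sup' Finset.nonempty_range_add_one
          (fun j => ‖p j‖ * x ^ j) :=
      Finset.le_sup' (fun j => ‖p j‖ * x ^ j) (Finset.mem_range.2 (show k ℓ < d + 1 by omega))
    have hS : (0:ℝ) ≤ (Finset.range (d + 1)).sup' Finset.nonempty_range_add_one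
        (fun j => ‖p j‖ * x ^ j) := le_trans (by positivity) h1
    obtain ⟨n, hn⟩ : ∃ n, k ℓ = i + n := ⟨k ℓ - i, by omega⟩
    rw [div_le_div_iff₀ (by positivity) (by positivity), hn]
    have key : τ ℓ ^ n ≤ x ^ n := pow_le_pow_left₀ hτpos.le hτx n
    rw [hn, pow_add] at h1
    have h2 := mul_le_mul_of_nonneg_left h1 (pow_nonneg hτpos.le i)
    have h3 := mul_le_mul_of_nonneg_left key
      (mul_nonneg (mul_nonneg (norm_nonneg (p (i + n)))
        (pow_nonneg hτpos.le i)) (pow_nonneg hx.le i))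
    rw [pow_add]
    nlinarith [h2, h3]
end

section
/- Define γ_i = inf_{x>0} β_i(x), where β_i(x) = (max_{0≤j≤d} |p_j| x^j)/(|p_i| x^i) if p_i ≠ 0 and β_i(x) = (max_{0≤j≤d} |p_j| x^j)/x^i if p_i = 0. Then: (a) γ_{k_ℓ} = 1 for every vertex index k_ℓ, ℓ = 0,…,t; (b) γ_i ≥ 1 whenever p_i ≠ 0; and (c) γ_i > 0 for every i ∈ {0,…,d}. -/
noncomputable def Mfun (d : ℕ) (p : ℕ → ℂ) (x : ℝ) : ℝ :=
  (Finset.range (d + 1)).sup' Finset.nonempty_range_add_one fun j => ‖p j‖ * x ^ j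

theorem Mfun_ge (d : ℕ) (p : ℕ → ℂ) (x : ℝ) {j : ℕ} (hj : j ≤ d) :
    ‖p j‖ * x ^ j ≤ Mfun d p x := by
  unfold Mfun
  exact Finset.le_sup' (fun j => ‖p j‖ * x ^ j) (Finset.mem_range.2 (Nat.lt_succ_of_le hj))

theorem Mfun_le (d : ℕ) (p : ℕ → ℂ) (x : ℝ) {B : ℝ}
    (h : ∀ j, j ≤ d → ‖p j‖ * x ^ j ≤ B) : Mfun d p x ≤ B :=
  Finset.sup'_le _ _ fun j hj => h j (Nat.lt_succ_iff.mp (Finset.mem_range.mp hj))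

open Classical in
/-- Define `γ_i = inf_{x>0} β_i(x)`, where
`β_i(x) = (max_{0≤j≤d} |p_j| x^j)/(|p_i| x^i)` if `p_i ≠ 0` and
`β_i(x) = (max_{0≤j≤d} |p_j| x^j)/x^i` if `p_i = 0`. Then:
(a) `γ_{k_ℓ} = 1` for every vertex index `k_ℓ`, `ℓ = 0,…,t`;
(b) `γ_i ≥ 1` whenever `p_i ≠ 0`; and (c) `γ_i > 0` for every `i ∈ {0,…,d}`. -/
theorem gamma_properties
    (d t : ℕ) (p : ℕ → ℂ) (hp0 : p 0 ≠ 0) (hpd : p d ≠ 0)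
    (k : ℕ → ℕ) (hk0 : k 0 = 0) (hkt : k t = d)
    (hkmono : ∀ ℓ, ℓ < t → k ℓ < k (ℓ + 1))
    (hpk : ∀ ℓ, ℓ ≤ t → p (k ℓ) ≠ 0)
    (τ : ℕ → ℝ)
    (hτ : ∀ ℓ, 1 ≤ ℓ → ℓ ≤ t →
      τ ℓ = (‖p (k (ℓ - 1))‖ / ‖p (k ℓ)‖) ^
            (1 / ((k ℓ - k (ℓ - 1) : ℕ) : ℝ)))
    (hτmono : ∀ ℓ, 1 ≤ ℓ → ℓ < t → τ ℓ < τ (ℓ + 1))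
    (hhull : ∀ ℓ, 1 ≤ ℓ → ℓ ≤ t → ∀ j, k (ℓ - 1) ≤ j → j ≤ k ℓ →
      ‖p j‖ * τ ℓ ^ j ≤ ‖p (k ℓ)‖ * τ ℓ ^ (k ℓ))
    (γ : ℕ → ℝ)
    (hγ : ∀ i, γ i = sInf {y : ℝ | ∃ x : ℝ, 0 < x ∧
      y = ((Finset.range (d + 1)).sup' Finset.nonempty_range_add_one
            fun j => ‖p j‖ * x ^ j) /
          ((if p i = 0 then 1 else ‖p i‖) * x ^ i)}) :
    (∀ ℓ, ℓ ≤ t → γ (k ℓ) = 1) ∧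
    (∀ i, i ≤ d → p i ≠ 0 → 1 ≤ γ i) ∧
    (∀ i, i ≤ d → 0 < γ i) := by
  classical
  have hApos : ∀ ℓ, ℓ ≤ t → 0 < ‖p (k ℓ)‖ := fun ℓ h => norm_pos_iff.mpr (hpk ℓ h)
  -- k is monotone
  have kle : ∀ b a, a ≤ b → b ≤ t → k a ≤ k b := by
    intro b
    induction b with
    | zero => intro a ha _; rw [Nat.le_zero.mp ha]
    | succ n ih =>
      intro a ha hb
      rcases eq_or_lt_of_le ha with h | h
      · exact le_of_eq (by rw [h])
      · have han : a ≤ n := by omega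
        exact le_trans (ih a han (by omega)) (hkmono n (by omega)).le
  have hkd : ∀ ℓ, ℓ ≤ t → k ℓ ≤ d := fun ℓ h => hkt ▸ kle t ℓ h le_rfl
  -- τ is positive
  have hτpos : ∀ ℓ, 1 ≤ ℓ → ℓ ≤ t → 0 < τ ℓ := by
    intro ℓ h1 h2
    rw [hτ ℓ h1 h2]
    exact Real.rpow_pos_of_pos (div_pos (hApos (ℓ - 1) (by omega)) (hApos ℓ h2)) _
  -- key identity on vertices
  have hE' : ∀ ℓ, 1 ≤ ℓ → ℓ ≤ t →
      ‖p (k ℓ)‖ * τ ℓ ^ (k ℓ - k (ℓ - 1)) = ‖p (k (ℓ - 1))‖ := by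
    intro ℓ h1 h2
    have hkk : k (ℓ - 1) < k ℓ := by
      have := hkmono (ℓ - 1) (by omega)
      rwa [Nat.sub_add_cancel h1] at this
    have ha : 0 < ‖p (k (ℓ - 1))‖ := hApos _ (by omega)
    have hb : 0 < ‖p (k ℓ)‖ := hApos _ h2
    have hm0 : k ℓ - k (ℓ - 1) ≠ 0 := by omega
    have hmR : ((k ℓ - k (ℓ - 1) : ℕ) : ℝ) ≠ 0 := Nat.cast_ne_zero.mpr hm0
    have hτm : τ ℓ ^ (k ℓ - k (ℓ - 1)) =
        ‖p (k (ℓ - 1))‖ / ‖p (k ℓ)‖ := by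
      rw [hτ ℓ h1 h2,
        ← Real.rpow_natCast ((‖p (k (ℓ - 1))‖ / ‖p (k ℓ)‖) ^
          (1 / ((k ℓ - k (ℓ - 1) : ℕ) : ℝ))) (k ℓ - k (ℓ - 1)),
        ← Real.rpow_mul (le_of_lt (div_pos ha hb))]
      rw [show (1 / ((k ℓ - k (ℓ - 1) : ℕ) : ℝ)) * ((k ℓ - k (ℓ - 1) : ℕ) : ℝ) = 1 by
        field_simp]
      exact Real.rpow_one _
    rw [hτm]
    field_simp
  have hE : ∀ ℓ, 1 ≤ ℓ → ℓ ≤ t →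
      ‖p (k ℓ)‖ * τ ℓ ^ (k ℓ) =
      ‖p (k (ℓ - 1))‖ * τ ℓ ^ (k (ℓ - 1)) := by
    intro ℓ h1 h2
    have hkk : k (ℓ - 1) < k ℓ := by
      have := hkmono (ℓ - 1) (by omega)
      rwa [Nat.sub_add_cancel h1] at this
    have hpow : τ ℓ ^ (k ℓ) = τ ℓ ^ (k ℓ - k (ℓ - 1)) * τ ℓ ^ (k (ℓ - 1)) := by
      rw [← pow_add]; congr 1; omega
    rw [hpow, ← mul_assoc, hE' ℓ h1 h2]
  -- τ is monotone
  have hτle : ∀ b a, 1 ≤ a → a ≤ b → b ≤ t → τ a ≤ τ b := by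
    intro b
    induction b with
    | zero => intro a h1 h2 _; exact absurd (h1.trans h2) (by omega)
    | succ n ih =>
      intro a h1 h2 h3
      rcases eq_or_lt_of_le h2 with h | h
      · exact le_of_eq (by rw [h])
      · have han : a ≤ n := by omega
        exact le_trans (ih a h1 han (by omega)) (hτmono n (by omega) (by omega)).le
  -- the main claim: at x = τ ℓ all terms are dominated by the ℓ-th vertex term
  have hC : ∀ ℓ, 1 ≤ ℓ → ℓ ≤ t → ∀ j, j ≤ d →
      ‖p j‖ * τ ℓ ^ j ≤ ‖p (k ℓ)‖ * τ ℓ ^ (k ℓ) := by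
    intro ℓ hℓ1 hℓt j hj
    have hx : 0 < τ ℓ := hτpos ℓ hℓ1 hℓt
    -- one step of the chain, going up (m ≥ ℓ)
    have step_up : ∀ n, ℓ ≤ n → n < t →
        ‖p (k (n + 1))‖ * τ ℓ ^ (k (n + 1)) ≤
        ‖p (k n)‖ * τ ℓ ^ (k n) := by
      intro n h1 h2
      have hxτ : τ ℓ ≤ τ (n + 1) := hτle (n + 1) ℓ hℓ1 (by omega) (by omega)
      have hE'n := hE' (n + 1) (by omega) (by omega)
      simp only [Nat.add_sub_cancel] at hE'n
      have hlt := hkmono n h2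
      have hpow : τ ℓ ^ (k (n + 1)) = τ ℓ ^ (k (n + 1) - k n) * τ ℓ ^ (k n) := by
        rw [← pow_add]; congr 1; omega
      calc ‖p (k (n + 1))‖ * τ ℓ ^ (k (n + 1))
          = ‖p (k (n + 1))‖ * τ ℓ ^ (k (n + 1) - k n) * τ ℓ ^ (k n) := by
            rw [hpow]; ring
        _ ≤ ‖p (k (n + 1))‖ * τ (n + 1) ^ (k (n + 1) - k n) * τ ℓ ^ (k n) := by
            refine mul_le_mul_of_nonneg_right ?_ (pow_pos hx _).le
            exact mul_le_mul_of_nonneg_left (pow_le_pow_left₀ hx.le hxτ _)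
              (norm_nonneg _)
        _ = ‖p (k n)‖ * τ ℓ ^ (k n) := by rw [hE'n]
    have Vup : ∀ n, ℓ ≤ n → n ≤ t →
        ‖p (k n)‖ * τ ℓ ^ (k n) ≤ ‖p (k ℓ)‖ * τ ℓ ^ (k ℓ) := by
      intro n
      induction n with
      | zero => intro h1 _; exact absurd (hℓ1.trans h1) (by omega)
      | succ n ih =>
        intro h1 h2
        rcases eq_or_lt_of_le h1 with h | h
        · exact le_of_eq (by rw [h])
        · exact le_trans (step_up n (by omega) (by omega)) (ih (by omega) (by omega))
    -- one step of the chain, going down (m ≤ ℓ)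
    have step_down : ∀ n, n < ℓ →
        ‖p (k n)‖ * τ ℓ ^ (k n) ≤
        ‖p (k (n + 1))‖ * τ ℓ ^ (k (n + 1)) := by
      intro n h1
      have hτx : τ (n + 1) ≤ τ ℓ := hτle ℓ (n + 1) (by omega) (by omega) hℓt
      have hE'n := hE' (n + 1) (by omega) (by omega)
      simp only [Nat.add_sub_cancel] at hE'n
      have hlt := hkmono n (by omega)
      have hτn : (0 : ℝ) < τ (n + 1) := hτpos (n + 1) (by omega) (by omega)
      have hpow : τ ℓ ^ (k (n + 1)) = τ ℓ ^ (k (n + 1) - k n) * τ ℓ ^ (k n) := by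
        rw [← pow_add]; congr 1; omega
      calc ‖p (k n)‖ * τ ℓ ^ (k n)
          = ‖p (k (n + 1))‖ * τ (n + 1) ^ (k (n + 1) - k n) * τ ℓ ^ (k n) := by
            rw [hE'n]
        _ ≤ ‖p (k (n + 1))‖ * τ ℓ ^ (k (n + 1) - k n) * τ ℓ ^ (k n) := by
            refine mul_le_mul_of_nonneg_right ?_ (pow_pos hx _).le
            exact mul_le_mul_of_nonneg_left (pow_le_pow_left₀ hτn.le hτx _)
              (norm_nonneg _)
        _ = ‖p (k (n + 1))‖ * τ ℓ ^ (k (n + 1)) := by rw [hpow]; ring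
    have Vdown : ∀ c n, n + c = ℓ →
        ‖p (k n)‖ * τ ℓ ^ (k n) ≤ ‖p (k ℓ)‖ * τ ℓ ^ (k ℓ) := by
      intro c
      induction c with
      | zero => intro n h; exact le_of_eq (by rw [show n = ℓ from by omega])
      | succ c ih =>
        intro n h
        exact le_trans (step_down n (by omega)) (ih (n + 1) (by omega))
    -- find the segment containing j
    have hjt : j ≤ k t := by rw [hkt]; exact hj
    have hex : ∃ m, 1 ≤ m ∧ j ≤ k m := ⟨t, hℓ1.trans hℓt, hjt⟩
    obtain ⟨hm1, hjm⟩ := Nat.find_spec hex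
    set m := Nat.find hex with hmdef
    have hmt : m ≤ t := Nat.find_min' hex ⟨hℓ1.trans hℓt, hjt⟩
    have hkm1j : k (m - 1) ≤ j := by
      rcases eq_or_lt_of_le hm1 with h | h
      · rw [← h, hk0]; exact Nat.zero_le j
      · have hmm := Nat.find_min hex (show m - 1 < m by omega)
        push_neg at hmm
        have := hmm (by omega)
        omega
    have hhm := hhull m hm1 hmt j hkm1j hjm
    have hτmpos : 0 < τ m := hτpos m hm1 hmt
    by_cases hcase : m ≤ ℓ
    · -- j belongs to a segment to the left: bound via right vertex k m
      have hτmx : τ m ≤ τ ℓ := hτle ℓ m hm1 hcase hℓt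
      have h1 : ‖p j‖ ≤ ‖p (k m)‖ * τ m ^ (k m - j) := by
        have hp2 : τ m ^ (k m) = τ m ^ (k m - j) * τ m ^ j := by
          rw [← pow_add]; congr 1; omega
        rw [hp2, ← mul_assoc] at hhm
        exact le_of_mul_le_mul_right hhm (pow_pos hτmpos j)
      calc ‖p j‖ * τ ℓ ^ j
          ≤ ‖p (k m)‖ * τ m ^ (k m - j) * τ ℓ ^ j :=
            mul_le_mul_of_nonneg_right h1 (pow_pos hx j).le
        _ ≤ ‖p (k m)‖ * τ ℓ ^ (k m - j) * τ ℓ ^ j := by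
            refine mul_le_mul_of_nonneg_right ?_ (pow_pos hx j).le
            exact mul_le_mul_of_nonneg_left (pow_le_pow_left₀ hτmpos.le hτmx _)
              (norm_nonneg _)
        _ = ‖p (k m)‖ * τ ℓ ^ (k m) := by
            rw [mul_assoc, ← pow_add, show k m - j + j = k m from by omega]
        _ ≤ ‖p (k ℓ)‖ * τ ℓ ^ (k ℓ) := Vdown (ℓ - m) m (by omega)
    · -- j belongs to a segment to the right: bound via left vertex k (m-1)
      push_neg at hcase
      have hxτm : τ ℓ ≤ τ m := hτle m ℓ hℓ1 (le_of_lt hcase) hmt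
      have hkm : k (m - 1) < k m := by
        have := hkmono (m - 1) (by omega)
        rwa [Nat.sub_add_cancel hm1] at this
      have h1 : ‖p j‖ * τ m ^ (j - k (m - 1)) ≤
          ‖p (k (m - 1))‖ := by
        rw [hE m hm1 hmt] at hhm
        have hp2 : τ m ^ j = τ m ^ (j - k (m - 1)) * τ m ^ (k (m - 1)) := by
          rw [← pow_add]; congr 1; omega
        rw [hp2, ← mul_assoc] at hhm
        exact le_of_mul_le_mul_right hhm (pow_pos hτmpos _)
      calc ‖p j‖ * τ ℓ ^ j
          = ‖p j‖ * τ ℓ ^ (j - k (m - 1)) * τ ℓ ^ (k (m - 1)) := by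
            rw [mul_assoc, ← pow_add, show j - k (m - 1) + k (m - 1) = j from by omega]
        _ ≤ ‖p j‖ * τ m ^ (j - k (m - 1)) * τ ℓ ^ (k (m - 1)) := by
            refine mul_le_mul_of_nonneg_right ?_ (pow_pos hx _).le
            exact mul_le_mul_of_nonneg_left (pow_le_pow_left₀ hx.le hxτm _)
              (norm_nonneg _)
        _ ≤ ‖p (k (m - 1))‖ * τ ℓ ^ (k (m - 1)) :=
            mul_le_mul_of_nonneg_right h1 (pow_pos hx _).le
        _ ≤ ‖p (k ℓ)‖ * τ ℓ ^ (k ℓ) := Vup (m - 1) (by omega) (by omega)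
  -- lower bound 1 for members when p i ≠ 0
  have hlb : ∀ i, i ≤ d → p i ≠ 0 → ∀ y : ℝ, (∃ x : ℝ, 0 < x ∧
      y = Mfun d p x / ((if p i = 0 then 1 else ‖p i‖) * x ^ i)) → 1 ≤ y := by
    rintro i hid hpi y ⟨x, hx, rfl⟩
    rw [if_neg hpi, le_div_iff₀ (mul_pos (norm_pos_iff.mpr hpi) (pow_pos hx i)), one_mul]
    exact Mfun_ge d p x hid
  -- part (b)
  have hb : ∀ i, i ≤ d → p i ≠ 0 → 1 ≤ γ i := by
    intro i hid hpi
    rw [hγ i]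
    exact le_csInf ⟨_, ⟨1, one_pos, rfl⟩⟩ fun y hy => hlb i hid hpi y hy
  -- part (a)
  have ha : ∀ ℓ, ℓ ≤ t → γ (k ℓ) = 1 := by
    intro ℓ hℓ
    have hne : p (k ℓ) ≠ 0 := hpk ℓ hℓ
    refine le_antisymm ?_ (hb (k ℓ) (hkd ℓ hℓ) hne)
    obtain ⟨x, hx, hMx⟩ : ∃ x : ℝ, 0 < x ∧
        Mfun d p x = ‖p (k ℓ)‖ * x ^ (k ℓ) := by
      rcases Nat.eq_zero_or_pos t with ht0 | ht1
      · have hℓ0 : ℓ = 0 := by omega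
        have hd0 : d = 0 := by rw [← hkt, ht0, hk0]
        subst hℓ0
        refine ⟨1, one_pos, le_antisymm (Mfun_le d p 1 fun j hj => ?_) (Mfun_ge d p 1 (hkd 0 hℓ))⟩
        have hj0 : j = 0 := by omega
        rw [hj0, hk0]
      · rcases Nat.eq_zero_or_pos ℓ with hℓ0 | hℓ1
        · subst hℓ0
          refine ⟨τ 1, hτpos 1 le_rfl ht1, ?_⟩
          have hE1 := hE 1 le_rfl ht1
          simp only [Nat.sub_self] at hE1
          refine le_antisymm (Mfun_le d p _ fun j hj => ?_) (Mfun_ge d p _ (hkd 0 hℓ))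
          calc ‖p j‖ * τ 1 ^ j
              ≤ ‖p (k 1)‖ * τ 1 ^ (k 1) := hC 1 le_rfl ht1 j hj
            _ = ‖p (k 0)‖ * τ 1 ^ (k 0) := hE1
        · exact ⟨τ ℓ, hτpos ℓ hℓ1 hℓ,
            le_antisymm (Mfun_le d p _ fun j hj => hC ℓ hℓ1 hℓ j hj)
              (Mfun_ge d p _ (hkd ℓ hℓ))⟩
    rw [hγ (k ℓ)]
    refine csInf_le ⟨1, fun y hy => hlb (k ℓ) (hkd ℓ hℓ) hne y hy⟩ ⟨x, hx, ?_⟩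
    show (1 : ℝ) = Mfun d p x / ((if p (k ℓ) = 0 then 1 else ‖p (k ℓ)‖) * x ^ (k ℓ))
    rw [hMx, if_neg hne]
    exact (div_self (ne_of_gt (mul_pos (norm_pos_iff.mpr hne) (pow_pos hx _)))).symm
  -- part (c)
  have hc : ∀ i, i ≤ d → 0 < γ i := by
    intro i hid
    have hcip : 0 < (if p i = 0 then 1 else ‖p i‖) := by
      split_ifs with h
      · exact one_pos
      · exact norm_pos_iff.mpr h
    have hm0 : 0 < min (‖p 0‖) (‖p d‖) :=
      lt_min (norm_pos_iff.mpr hp0) (norm_pos_iff.mpr hpd)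
    set m0 := min (‖p 0‖) (‖p d‖) with hm0def
    have hlow : ∀ y : ℝ, (∃ x : ℝ, 0 < x ∧
        y = Mfun d p x / ((if p i = 0 then 1 else ‖p i‖) * x ^ i)) →
        m0 / (if p i = 0 then 1 else ‖p i‖) ≤ y := by
      rintro y ⟨x, hx, rfl⟩
      have hMx : m0 * x ^ i ≤ Mfun d p x := by
        rcases le_total x 1 with hx1 | hx1
        · calc m0 * x ^ i ≤ ‖p 0‖ * x ^ i :=
              mul_le_mul_of_nonneg_right (min_le_left _ _) (pow_pos hx i).le
            _ ≤ ‖p 0‖ * 1 :=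
              mul_le_mul_of_nonneg_left (pow_le_one₀ hx.le hx1) (norm_nonneg _)
            _ = ‖p 0‖ * x ^ 0 := by rw [pow_zero]
            _ ≤ Mfun d p x := Mfun_ge d p x (Nat.zero_le d)
        · calc m0 * x ^ i ≤ ‖p d‖ * x ^ i :=
              mul_le_mul_of_nonneg_right (min_le_right _ _) (pow_pos hx i).le
            _ ≤ ‖p d‖ * x ^ d :=
              mul_le_mul_of_nonneg_left (pow_le_pow_right₀ hx1 hid) (norm_nonneg _)
            _ ≤ Mfun d p x := Mfun_ge d p x le_rfl
      rw [div_le_div_iff₀ hcip (mul_pos hcip (pow_pos hx i))]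
      nlinarith [mul_le_mul_of_nonneg_right hMx hcip.le]
    rw [hγ i]
    exact lt_of_lt_of_le (div_pos hm0 hcip) (le_csInf ⟨_, ⟨1, one_pos, rfl⟩⟩ hlow)
  exact ⟨ha, hb, hc⟩
end
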